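/- arXiv:1406.2987 — 6 statements merged into one kernel-verified Lean document; each statement's English description precedes it below -/
import Mathlib

section
/- Let A be a commutative Hopf ℂ-algebra which is finitely generated as a ℂ-algebra, and let J be a Hopf 2-cocycle for A. Then the twisted algebra A_J is a finitely generated ℂ-algebra. -/
set_option linter.unusedSectionVars false
set_option maxHeartbeats 1000000
set_option synthInstance.maxHeartbeats 400000


open TensorProduct LinearMap Coalgebra

noncomputable section

namespace Twisting

/-- Convolution product of linear functionals on a coalgebra. -/
def conv {C : Type*} [AddCommMonoid C] [Module ℂ C] [CoalgebraStruct ℂ C]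
    (F G : C →ₗ[ℂ] ℂ) : C →ₗ[ℂ] ℂ :=
  LinearMap.mul' ℂ ℂ ∘ₗ TensorProduct.map F G ∘ₗ Coalgebra.comul

variable (A : Type*) [CommRing A] [HopfAlgebra ℂ A]

/-- A Hopf 2-cocycle for the Hopf algebra `A`:  a convolution-invertible linear functional
`J` on `A ⊗ A` satisfying the 2-cocycle identity
`Σ J(a₁b₁ ⊗ c) J(a₂ ⊗ b₂) = Σ J(a ⊗ b₁c₁) J(b₂ ⊗ c₂)` (expressed below as an equality of
linear functionals on `(A ⊗ A) ⊗ A`) and the normalization `J(a ⊗ 1) = ε(a) = J(1 ⊗ a)`. -/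
structure Hopf2Cocycle where
  J : A ⊗[ℂ] A →ₗ[ℂ] ℂ
  Jinv : A ⊗[ℂ] A →ₗ[ℂ] ℂ
  conv_right_inv : conv J Jinv = Coalgebra.counit
  conv_left_inv : conv Jinv J = Coalgebra.counit
  cocycle : conv (J ∘ₗ TensorProduct.map (LinearMap.mul' ℂ A) LinearMap.id)
        (LinearMap.mul' ℂ ℂ ∘ₗ TensorProduct.map J Coalgebra.counit)
      = conv (J ∘ₗ TensorProduct.map LinearMap.id (LinearMap.mul' ℂ A)
            ∘ₗ (TensorProduct.assoc ℂ A A A).toLinearMap)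
        (LinearMap.mul' ℂ ℂ ∘ₗ TensorProduct.map Coalgebra.counit J
            ∘ₗ (TensorProduct.assoc ℂ A A A).toLinearMap)
  norm_right : ∀ a : A, J (a ⊗ₜ[ℂ] 1) = Coalgebra.counit a
  norm_left : ∀ a : A, J ((1 : A) ⊗ₜ[ℂ] a) = Coalgebra.counit a

variable {A}

namespace Hopf2Cocycle

/-- The cotriangular form `R^J (a ⊗ b) = Σ J⁻¹(b₁ ⊗ a₁) J(a₂ ⊗ b₂)`. -/
def RJ (c : Hopf2Cocycle A) : A ⊗[ℂ] A →ₗ[ℂ] ℂ :=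
  conv (c.Jinv ∘ₗ (TensorProduct.comm ℂ A A).toLinearMap) c.J

/-- `J` is minimal if `R^J` is nondegenerate. -/
def Minimal (c : Hopf2Cocycle A) : Prop :=
  ∀ a : A, (∀ b : A, c.RJ (a ⊗ₜ[ℂ] b) = 0) → a = 0

/-- The multiplication `a ·_J b = Σ a₁b₁ J(a₂ ⊗ b₂)` of the twisted algebra `A_J`. -/
def mulJ (c : Hopf2Cocycle A) : A ⊗[ℂ] A →ₗ[ℂ] A :=
  (TensorProduct.rid ℂ A).toLinearMap
    ∘ₗ TensorProduct.map (LinearMap.mul' ℂ A) c.J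
    ∘ₗ Coalgebra.comul

end Hopf2Cocycle

section Infra


variable {M N : Type*} [AddCommGroup M] [Module ℂ M] [AddCommGroup N] [Module ℂ N]
  [Coalgebra ℂ M] [Coalgebra ℂ N]

lemma tensor_comul_def :
    (Coalgebra.comul : M ⊗[ℂ] N →ₗ[ℂ] _) =
      (tensorTensorTensorComm ℂ M M N N).toLinearMap ∘ₗ map Coalgebra.comul Coalgebra.comul := rfl

lemma tensor_counit_def :
    (Coalgebra.counit : M ⊗[ℂ] N →ₗ[ℂ] ℂ) =
      LinearMap.mul' ℂ ℂ ∘ₗ map Coalgebra.counit Coalgebra.counit := by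
  apply TensorProduct.ext'
  intro m n
  simp [mul_comm]

section Combinators

variable {M' N' P Q : Type*} [AddCommGroup M'] [Module ℂ M'] [AddCommGroup N'] [Module ℂ N']
  [AddCommGroup P] [Module ℂ P] [AddCommGroup Q] [Module ℂ Q]

lemma GC1 (φ : M →ₗ[ℂ] ℂ) (ψ : N →ₗ[ℂ] ℂ) :
    (LinearMap.mul' ℂ ℂ ∘ₗ map φ ψ).rTensor (M ⊗[ℂ] N) ∘ₗ
      (tensorTensorTensorComm ℂ M M N N).toLinearMap =
    map (LinearMap.mul' ℂ ℂ) LinearMap.id ∘ₗ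
      (tensorTensorTensorComm ℂ ℂ M ℂ N).toLinearMap ∘ₗ
      map (φ.rTensor M) (ψ.rTensor N) := by
  ext m m' n n'
  simp [mul_comm]

lemma GC1' (φ : M →ₗ[ℂ] ℂ) (ψ : N →ₗ[ℂ] ℂ) :
    (LinearMap.mul' ℂ ℂ ∘ₗ map φ ψ).lTensor (M ⊗[ℂ] N) ∘ₗ
      (tensorTensorTensorComm ℂ M M N N).toLinearMap =
    map LinearMap.id (LinearMap.mul' ℂ ℂ) ∘ₗ
      (tensorTensorTensorComm ℂ M ℂ N ℂ).toLinearMap ∘ₗ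
      map (φ.lTensor M) (ψ.lTensor N) := by
  ext m m' n n'
  simp [mul_comm]

lemma GC2 (f : M →ₗ[ℂ] M ⊗[ℂ] M) (g : N →ₗ[ℂ] N ⊗[ℂ] N) :
    ((tensorTensorTensorComm ℂ M M N N).toLinearMap ∘ₗ map f g).rTensor (M ⊗[ℂ] N) ∘ₗ
      (tensorTensorTensorComm ℂ M M N N).toLinearMap =
    ((tensorTensorTensorComm ℂ M M N N).toLinearMap).rTensor (M ⊗[ℂ] N) ∘ₗ
      (tensorTensorTensorComm ℂ (M ⊗[ℂ] M) M (N ⊗[ℂ] N) N).toLinearMap ∘ₗ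
      map (f.rTensor M) (g.rTensor N) := by
  ext m m' n n'
  simp

lemma GC2' (f : M →ₗ[ℂ] M ⊗[ℂ] M) (g : N →ₗ[ℂ] N ⊗[ℂ] N) :
    ((tensorTensorTensorComm ℂ M M N N).toLinearMap ∘ₗ map f g).lTensor (M ⊗[ℂ] N) ∘ₗ
      (tensorTensorTensorComm ℂ M M N N).toLinearMap =
    ((tensorTensorTensorComm ℂ M M N N).toLinearMap).lTensor (M ⊗[ℂ] N) ∘ₗ
      (tensorTensorTensorComm ℂ M (M ⊗[ℂ] M) N (N ⊗[ℂ] N)).toLinearMap ∘ₗ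
      map (f.lTensor M) (g.lTensor N) := by
  ext m m' n n'
  simp

/-- pure rearrangement identity used in coassoc -/
lemma GC3 :
    (TensorProduct.assoc ℂ (M ⊗[ℂ] N) (M ⊗[ℂ] N) (M ⊗[ℂ] N)).toLinearMap ∘ₗ
      ((tensorTensorTensorComm ℂ M M N N).toLinearMap).rTensor (M ⊗[ℂ] N) ∘ₗ
      (tensorTensorTensorComm ℂ (M ⊗[ℂ] M) M (N ⊗[ℂ] N) N).toLinearMap ∘ₗ
      map (TensorProduct.assoc ℂ M M M).symm.toLinearMap
          (TensorProduct.assoc ℂ N N N).symm.toLinearMap =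
    ((tensorTensorTensorComm ℂ M M N N).toLinearMap).lTensor (M ⊗[ℂ] N) ∘ₗ
      (tensorTensorTensorComm ℂ M (M ⊗[ℂ] M) N (N ⊗[ℂ] N)).toLinearMap := by
  ext m₁ m₂ m₃ n₁ n₂ n₃
  simp

end Combinators

/-- universe-polymorphic `Coalgebra` structure on tensor products -/
instance (priority := 900) tensorCoalgebra : Coalgebra ℂ (M ⊗[ℂ] N) where
  coassoc := by
    rw [tensor_comul_def]
    calc (TensorProduct.assoc ℂ _ _ _).toLinearMap ∘ₗ
          ((tensorTensorTensorComm ℂ M M N N).toLinearMap ∘ₗ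
            map Coalgebra.comul Coalgebra.comul).rTensor (M ⊗[ℂ] N) ∘ₗ
          ((tensorTensorTensorComm ℂ M M N N).toLinearMap ∘ₗ map Coalgebra.comul Coalgebra.comul)
        = (TensorProduct.assoc ℂ _ _ _).toLinearMap ∘ₗ
          (((tensorTensorTensorComm ℂ M M N N).toLinearMap ∘ₗ
            map Coalgebra.comul Coalgebra.comul).rTensor (M ⊗[ℂ] N) ∘ₗ
           (tensorTensorTensorComm ℂ M M N N).toLinearMap) ∘ₗ
           map Coalgebra.comul Coalgebra.comul := by
          simp only [LinearMap.comp_assoc]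
      _ = (TensorProduct.assoc ℂ _ _ _).toLinearMap ∘ₗ
          (((tensorTensorTensorComm ℂ M M N N).toLinearMap).rTensor (M ⊗[ℂ] N) ∘ₗ
            (tensorTensorTensorComm ℂ (M ⊗[ℂ] M) M (N ⊗[ℂ] N) N).toLinearMap ∘ₗ
            map (comul.rTensor M ∘ₗ comul) (comul.rTensor N ∘ₗ comul)) := by
          rw [GC2]; simp only [LinearMap.comp_assoc, ← TensorProduct.map_comp]
      _ = (TensorProduct.assoc ℂ _ _ _).toLinearMap ∘ₗ
          (((tensorTensorTensorComm ℂ M M N N).toLinearMap).rTensor (M ⊗[ℂ] N) ∘ₗ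
            (tensorTensorTensorComm ℂ (M ⊗[ℂ] M) M (N ⊗[ℂ] N) N).toLinearMap ∘ₗ
            map ((TensorProduct.assoc ℂ M M M).symm.toLinearMap ∘ₗ
                  (comul.lTensor M ∘ₗ comul))
                ((TensorProduct.assoc ℂ N N N).symm.toLinearMap ∘ₗ
                  (comul.lTensor N ∘ₗ comul))) := by
          rw [← Coalgebra.coassoc_symm (R := ℂ) (A := M),
              ← Coalgebra.coassoc_symm (R := ℂ) (A := N)]
      _ = ((TensorProduct.assoc ℂ (M ⊗[ℂ] N) (M ⊗[ℂ] N) (M ⊗[ℂ] N)).toLinearMap ∘ₗ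
          ((tensorTensorTensorComm ℂ M M N N).toLinearMap).rTensor (M ⊗[ℂ] N) ∘ₗ
          (tensorTensorTensorComm ℂ (M ⊗[ℂ] M) M (N ⊗[ℂ] N) N).toLinearMap ∘ₗ
          map (TensorProduct.assoc ℂ M M M).symm.toLinearMap
              (TensorProduct.assoc ℂ N N N).symm.toLinearMap) ∘ₗ
          map (comul.lTensor M ∘ₗ comul) (comul.lTensor N ∘ₗ comul) := by
          rw [TensorProduct.map_comp]; simp only [LinearMap.comp_assoc]
      _ = (((tensorTensorTensorComm ℂ M M N N).toLinearMap).lTensor (M ⊗[ℂ] N) ∘ₗ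
          (tensorTensorTensorComm ℂ M (M ⊗[ℂ] M) N (N ⊗[ℂ] N)).toLinearMap) ∘ₗ
          map (comul.lTensor M ∘ₗ comul) (comul.lTensor N ∘ₗ comul) := by rw [GC3]
      _ = (((tensorTensorTensorComm ℂ M M N N).toLinearMap).lTensor (M ⊗[ℂ] N) ∘ₗ
          (tensorTensorTensorComm ℂ M (M ⊗[ℂ] M) N (N ⊗[ℂ] N)).toLinearMap ∘ₗ
          map (comul.lTensor M) (comul.lTensor N)) ∘ₗ
          map Coalgebra.comul Coalgebra.comul := by
          simp only [LinearMap.comp_assoc, ← TensorProduct.map_comp]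
      _ = (((tensorTensorTensorComm ℂ M M N N).toLinearMap ∘ₗ
            map Coalgebra.comul Coalgebra.comul).lTensor (M ⊗[ℂ] N) ∘ₗ
           (tensorTensorTensorComm ℂ M M N N).toLinearMap) ∘ₗ
            map Coalgebra.comul Coalgebra.comul := by rw [GC2']
      _ = _ := by simp only [LinearMap.comp_assoc]
  rTensor_counit_comp_comul := by
    rw [tensor_comul_def, tensor_counit_def]
    rw [show (LinearMap.mul' ℂ ℂ ∘ₗ map (counit : M →ₗ[ℂ] ℂ) counit).rTensor (M ⊗[ℂ] N) ∘ₗ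
        (tensorTensorTensorComm ℂ M M N N).toLinearMap ∘ₗ map Coalgebra.comul Coalgebra.comul
        = (map (LinearMap.mul' ℂ ℂ) LinearMap.id ∘ₗ
            (tensorTensorTensorComm ℂ ℂ M ℂ N).toLinearMap) ∘ₗ
          map (counit.rTensor M ∘ₗ comul) (counit.rTensor N ∘ₗ comul) by
      simp only [← LinearMap.comp_assoc, GC1]
      simp only [LinearMap.comp_assoc, ← TensorProduct.map_comp]]
    rw [Coalgebra.rTensor_counit_comp_comul, Coalgebra.rTensor_counit_comp_comul]
    ext m n
    simp
  lTensor_counit_comp_comul := by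
    rw [tensor_comul_def, tensor_counit_def]
    rw [show (LinearMap.mul' ℂ ℂ ∘ₗ map (counit : M →ₗ[ℂ] ℂ) counit).lTensor (M ⊗[ℂ] N) ∘ₗ
        (tensorTensorTensorComm ℂ M M N N).toLinearMap ∘ₗ map Coalgebra.comul Coalgebra.comul
        = (map LinearMap.id (LinearMap.mul' ℂ ℂ) ∘ₗ
            (tensorTensorTensorComm ℂ M ℂ N ℂ).toLinearMap) ∘ₗ
          map (counit.lTensor M ∘ₗ comul) (counit.lTensor N ∘ₗ comul) by
      simp only [← LinearMap.comp_assoc, GC1']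
      simp only [LinearMap.comp_assoc, ← TensorProduct.map_comp]]
    rw [Coalgebra.lTensor_counit_comp_comul, Coalgebra.lTensor_counit_comp_comul]
    ext m n
    simp



/-! ### cw machinery -/


section CW

variable {C D M P : Type*} [AddCommGroup C] [Module ℂ C] [Coalgebra ℂ C]
  [AddCommGroup D] [Module ℂ D] [Coalgebra ℂ D]
  [AddCommGroup M] [Module ℂ M] [AddCommGroup P] [Module ℂ P]

/-- `cw g φ (c) = Σ φ(c₂) • g(c₁)`. -/
def cw (g : C →ₗ[ℂ] M) (φ : C →ₗ[ℂ] ℂ) : C →ₗ[ℂ] M :=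
  (TensorProduct.rid ℂ M).toLinearMap ∘ₗ map g φ ∘ₗ Coalgebra.comul

lemma mul'_eq_rid : (LinearMap.mul' ℂ ℂ) = (TensorProduct.rid ℂ ℂ).toLinearMap := by
  apply TensorProduct.ext'
  intro x y
  simp [smul_eq_mul, mul_comm]

lemma conv_eq_cw (φ ψ : C →ₗ[ℂ] ℂ) : conv φ ψ = cw φ ψ := by
  rw [conv, cw, mul'_eq_rid]

/-- naturality of rid -/
lemma rid_natural (F : M →ₗ[ℂ] P) :
    F ∘ₗ (TensorProduct.rid ℂ M).toLinearMap =
      (TensorProduct.rid ℂ P).toLinearMap ∘ₗ F.rTensor ℂ := by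
  apply TensorProduct.ext'
  intro x y
  simp

lemma comp_cw (F : M →ₗ[ℂ] P) (h : C →ₗ[ℂ] M) (ψ : C →ₗ[ℂ] ℂ) :
    F ∘ₗ cw h ψ = cw (F ∘ₗ h) ψ := by
  rw [cw, cw, ← LinearMap.comp_assoc, ← LinearMap.comp_assoc, rid_natural,
    LinearMap.comp_assoc, LinearMap.comp_assoc]
  congr 1
  rw [← LinearMap.comp_assoc, LinearMap.rTensor, ← TensorProduct.map_comp]
  simp

lemma cw_counit (g : C →ₗ[ℂ] M) : cw g Coalgebra.counit = g := by
  rw [cw, show map g (Coalgebra.counit : C →ₗ[ℂ] ℂ)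
      = (g.rTensor ℂ) ∘ₗ ((Coalgebra.counit : C →ₗ[ℂ] ℂ).lTensor C) by
    rw [LinearMap.rTensor, LinearMap.lTensor, ← TensorProduct.map_comp]; simp]
  simp only [LinearMap.comp_assoc]
  rw [Coalgebra.lTensor_counit_comp_comul]
  ext c
  simp

/-- generic rearrangement for `cw_cw` -/
lemma GCW (g : C →ₗ[ℂ] M) (φ ψ : C →ₗ[ℂ] ℂ) :
    (TensorProduct.rid ℂ M).toLinearMap ∘ₗ
      map ((TensorProduct.rid ℂ M).toLinearMap ∘ₗ map g φ) ψ ∘ₗ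
      (TensorProduct.assoc ℂ C C C).symm.toLinearMap =
    (TensorProduct.rid ℂ M).toLinearMap ∘ₗ map g (LinearMap.mul' ℂ ℂ ∘ₗ map φ ψ) := by
  ext c₁ c₂ c₃
  simp [smul_smul, mul_comm]

lemma cw_cw (g : C →ₗ[ℂ] M) (φ ψ : C →ₗ[ℂ] ℂ) :
    cw (cw g φ) ψ = cw g (conv φ ψ) := by
  rw [cw, cw, cw, conv]
  have h1 : map ((TensorProduct.rid ℂ M).toLinearMap ∘ₗ map g φ ∘ₗ Coalgebra.comul) ψ
      = map ((TensorProduct.rid ℂ M).toLinearMap ∘ₗ map g φ) ψ ∘ₗ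
        ((Coalgebra.comul : C →ₗ[ℂ] C ⊗[ℂ] C).rTensor C) := by
    rw [LinearMap.rTensor, ← TensorProduct.map_comp]
    simp [LinearMap.comp_assoc]
  have h2 : map g (LinearMap.mul' ℂ ℂ ∘ₗ map φ ψ ∘ₗ Coalgebra.comul)
      = map g (LinearMap.mul' ℂ ℂ ∘ₗ map φ ψ) ∘ₗ
        ((Coalgebra.comul : C →ₗ[ℂ] C ⊗[ℂ] C).lTensor C) := by
    rw [LinearMap.lTensor, ← TensorProduct.map_comp]
    simp [LinearMap.comp_assoc]
  rw [h1, h2]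
  have h3 := congrArg
    (fun F : C ⊗[ℂ] (C ⊗[ℂ] C) →ₗ[ℂ] M =>
      F ∘ₗ ((Coalgebra.comul : C →ₗ[ℂ] C ⊗[ℂ] C).lTensor C ∘ₗ Coalgebra.comul))
    (GCW g φ ψ)
  simp only [LinearMap.comp_assoc] at h3 ⊢
  rw [← Coalgebra.coassoc_symm]
  exact h3

lemma cw_comp_coalgHom (g : C →ₗ[ℂ] M) (φ : C →ₗ[ℂ] ℂ) (f : D →ₗc[ℂ] C) :
    cw g φ ∘ₗ f.toLinearMap = cw (g ∘ₗ f.toLinearMap) (φ ∘ₗ f.toLinearMap) := by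
  rw [cw, cw, LinearMap.comp_assoc, LinearMap.comp_assoc, ← f.map_comp_comul,
    TensorProduct.map_comp]
  simp only [LinearMap.comp_assoc]

lemma conv_comp_coalgHom (φ ψ : C →ₗ[ℂ] ℂ) (f : D →ₗc[ℂ] C) :
    conv φ ψ ∘ₗ f.toLinearMap = conv (φ ∘ₗ f.toLinearMap) (ψ ∘ₗ f.toLinearMap) := by
  rw [conv_eq_cw, conv_eq_cw, cw_comp_coalgHom]

end CW


section L6

variable {C D M : Type*} [AddCommGroup C] [Module ℂ C] [Coalgebra ℂ C]
  [AddCommGroup D] [Module ℂ D] [Coalgebra ℂ D]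
  [AddCommGroup M] [Module ℂ M]

lemma GL6 (g : C →ₗ[ℂ] M) (φ : C →ₗ[ℂ] ℂ) (ψ : D →ₗ[ℂ] ℂ) :
    (TensorProduct.rid ℂ (M ⊗[ℂ] D)).toLinearMap ∘ₗ
      map (map g (LinearMap.id : D →ₗ[ℂ] D)) (LinearMap.mul' ℂ ℂ ∘ₗ map φ ψ) ∘ₗ
      (tensorTensorTensorComm ℂ C C D D).toLinearMap =
    map ((TensorProduct.rid ℂ M).toLinearMap ∘ₗ map g φ)
        ((TensorProduct.rid ℂ D).toLinearMap ∘ₗ map (LinearMap.id : D →ₗ[ℂ] D) ψ) := by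
  ext c c' d d'
  simp [smul_tmul', tmul_smul, smul_smul, mul_comm]

lemma GL6' (g : C →ₗ[ℂ] M) (φ : C →ₗ[ℂ] ℂ) (ψ : D →ₗ[ℂ] ℂ) :
    (TensorProduct.rid ℂ (D ⊗[ℂ] M)).toLinearMap ∘ₗ
      map (map (LinearMap.id : D →ₗ[ℂ] D) g) (LinearMap.mul' ℂ ℂ ∘ₗ map ψ φ) ∘ₗ
      (tensorTensorTensorComm ℂ D D C C).toLinearMap =
    map ((TensorProduct.rid ℂ D).toLinearMap ∘ₗ map (LinearMap.id : D →ₗ[ℂ] D) ψ)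
        ((TensorProduct.rid ℂ M).toLinearMap ∘ₗ map g φ) := by
  ext d d' c c'
  simp [smul_tmul', tmul_smul, smul_smul, mul_comm]

lemma map_cw_id (g : C →ₗ[ℂ] M) (φ : C →ₗ[ℂ] ℂ) :
    map (cw g φ) (LinearMap.id : D →ₗ[ℂ] D)
      = cw (map g (LinearMap.id : D →ₗ[ℂ] D))
          (LinearMap.mul' ℂ ℂ ∘ₗ map φ Coalgebra.counit) := by
  symm
  rw [cw, tensor_comul_def]
  calc (TensorProduct.rid ℂ (M ⊗[ℂ] D)).toLinearMap ∘ₗ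
        map (map g LinearMap.id) (LinearMap.mul' ℂ ℂ ∘ₗ map φ Coalgebra.counit) ∘ₗ
        ((tensorTensorTensorComm ℂ C C D D).toLinearMap ∘ₗ
          map Coalgebra.comul Coalgebra.comul)
      = ((TensorProduct.rid ℂ (M ⊗[ℂ] D)).toLinearMap ∘ₗ
          map (map g LinearMap.id) (LinearMap.mul' ℂ ℂ ∘ₗ map φ Coalgebra.counit) ∘ₗ
          (tensorTensorTensorComm ℂ C C D D).toLinearMap) ∘ₗ
          map Coalgebra.comul Coalgebra.comul := by simp only [LinearMap.comp_assoc]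
    _ = map ((TensorProduct.rid ℂ M).toLinearMap ∘ₗ map g φ)
          ((TensorProduct.rid ℂ D).toLinearMap ∘ₗ map LinearMap.id Coalgebra.counit) ∘ₗ
          map Coalgebra.comul Coalgebra.comul := by rw [GL6]
    _ = map (cw g φ) (cw LinearMap.id Coalgebra.counit) := by
          rw [← TensorProduct.map_comp, cw, cw]
          simp only [LinearMap.comp_assoc]
    _ = map (cw g φ) LinearMap.id := by rw [cw_counit]

lemma map_id_cw (g : C →ₗ[ℂ] M) (φ : C →ₗ[ℂ] ℂ) :
    map (LinearMap.id : D →ₗ[ℂ] D) (cw g φ)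
      = cw (map (LinearMap.id : D →ₗ[ℂ] D) g)
          (LinearMap.mul' ℂ ℂ ∘ₗ map Coalgebra.counit φ) := by
  symm
  rw [cw, tensor_comul_def]
  calc (TensorProduct.rid ℂ (D ⊗[ℂ] M)).toLinearMap ∘ₗ
        map (map LinearMap.id g) (LinearMap.mul' ℂ ℂ ∘ₗ map Coalgebra.counit φ) ∘ₗ
        ((tensorTensorTensorComm ℂ D D C C).toLinearMap ∘ₗ
          map Coalgebra.comul Coalgebra.comul)
      = ((TensorProduct.rid ℂ (D ⊗[ℂ] M)).toLinearMap ∘ₗ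
          map (map LinearMap.id g) (LinearMap.mul' ℂ ℂ ∘ₗ map Coalgebra.counit φ) ∘ₗ
          (tensorTensorTensorComm ℂ D D C C).toLinearMap) ∘ₗ
          map Coalgebra.comul Coalgebra.comul := by simp only [LinearMap.comp_assoc]
    _ = map ((TensorProduct.rid ℂ D).toLinearMap ∘ₗ map LinearMap.id Coalgebra.counit)
          ((TensorProduct.rid ℂ M).toLinearMap ∘ₗ map g φ) ∘ₗ
          map Coalgebra.comul Coalgebra.comul := by rw [GL6']
    _ = map (cw LinearMap.id Coalgebra.counit) (cw g φ) := by
          rw [← TensorProduct.map_comp, cw, cw]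
          simp only [LinearMap.comp_assoc]
    _ = map LinearMap.id (cw g φ) := by rw [cw_counit]

end L6

section CoalgHoms

variable {C D C' D' E : Type*}
  [AddCommGroup C] [Module ℂ C] [Coalgebra ℂ C]
  [AddCommGroup D] [Module ℂ D] [Coalgebra ℂ D]
  [AddCommGroup C'] [Module ℂ C'] [Coalgebra ℂ C']
  [AddCommGroup D'] [Module ℂ D'] [Coalgebra ℂ D']
  [AddCommGroup E] [Module ℂ E] [Coalgebra ℂ E]

lemma GTTC (f : C →ₗ[ℂ] C') (k : D →ₗ[ℂ] D') :
    map (map f k) (map f k) ∘ₗ (tensorTensorTensorComm ℂ C C D D).toLinearMap =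
    (tensorTensorTensorComm ℂ C' C' D' D').toLinearMap ∘ₗ map (map f f) (map k k) := by
  ext c c' d d'
  simp

/-- tensor product of coalgebra morphisms -/
def tMap (f : C →ₗc[ℂ] C') (k : D →ₗc[ℂ] D') : C ⊗[ℂ] D →ₗc[ℂ] C' ⊗[ℂ] D' where
  toLinearMap := map f.toLinearMap k.toLinearMap
  counit_comp := by
    rw [tensor_counit_def, tensor_counit_def, LinearMap.comp_assoc,
      ← TensorProduct.map_comp, f.counit_comp, k.counit_comp]
  map_comp_comul := by
    rw [tensor_comul_def, tensor_comul_def]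
    calc map (map f.toLinearMap k.toLinearMap) (map f.toLinearMap k.toLinearMap) ∘ₗ
          (tensorTensorTensorComm ℂ C C D D).toLinearMap ∘ₗ
          map Coalgebra.comul Coalgebra.comul
        = (tensorTensorTensorComm ℂ C' C' D' D').toLinearMap ∘ₗ
            map (map f.toLinearMap f.toLinearMap ∘ₗ Coalgebra.comul)
                (map k.toLinearMap k.toLinearMap ∘ₗ Coalgebra.comul) := by
          rw [← LinearMap.comp_assoc, GTTC]
          simp only [LinearMap.comp_assoc, ← TensorProduct.map_comp]
      _ = (tensorTensorTensorComm ℂ C' C' D' D').toLinearMap ∘ₗ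
            map (Coalgebra.comul ∘ₗ f.toLinearMap) (Coalgebra.comul ∘ₗ k.toLinearMap) := by
          rw [f.map_comp_comul, k.map_comp_comul]
      _ = _ := by
          rw [TensorProduct.map_comp]
          simp only [LinearMap.comp_assoc]

@[simp] lemma tMap_toLinearMap (f : C →ₗc[ℂ] C') (k : D →ₗc[ℂ] D') :
    (tMap f k).toLinearMap = map f.toLinearMap k.toLinearMap := rfl

lemma ASNAT {C₁ D₁ E₁ : Type*} [AddCommGroup C₁] [Module ℂ C₁] [AddCommGroup D₁] [Module ℂ D₁]
    [AddCommGroup E₁] [Module ℂ E₁]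
    (f : C →ₗ[ℂ] C₁) (g : D →ₗ[ℂ] D₁) (h : E →ₗ[ℂ] E₁) :
    (TensorProduct.assoc ℂ C₁ D₁ E₁).toLinearMap ∘ₗ map (map f g) h =
      map f (map g h) ∘ₗ (TensorProduct.assoc ℂ C D E).toLinearMap := by
  ext c d e
  simp

lemma GAS0 :
    (tensorTensorTensorComm ℂ C C (D ⊗[ℂ] E) (D ⊗[ℂ] E)).toLinearMap ∘ₗ
      map LinearMap.id (tensorTensorTensorComm ℂ D D E E).toLinearMap ∘ₗ
      (TensorProduct.assoc ℂ (C ⊗[ℂ] C) (D ⊗[ℂ] D) (E ⊗[ℂ] E)).toLinearMap =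
    map (TensorProduct.assoc ℂ C D E).toLinearMap
        (TensorProduct.assoc ℂ C D E).toLinearMap ∘ₗ
      (tensorTensorTensorComm ℂ (C ⊗[ℂ] D) (C ⊗[ℂ] D) E E).toLinearMap ∘ₗ
      map (tensorTensorTensorComm ℂ C C D D).toLinearMap LinearMap.id := by
  ext c c' d d' e e'
  simp

/-- the associator as a coalgebra morphism -/
def aCoalg : (C ⊗[ℂ] D) ⊗[ℂ] E →ₗc[ℂ] C ⊗[ℂ] (D ⊗[ℂ] E) where
  toLinearMap := (TensorProduct.assoc ℂ C D E).toLinearMap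
  counit_comp := by
    apply TensorProduct.ext'
    intro x e
    refine x.induction_on (by simp) (fun c d => ?_) (fun u v hu hv => ?_)
    · simp [tensor_counit_def, mul_assoc]
    · have h1 : ((u + v) ⊗ₜ[ℂ] e : (C ⊗[ℂ] D) ⊗[ℂ] E) = u ⊗ₜ e + v ⊗ₜ e :=
        TensorProduct.add_tmul u v e
      rw [h1, map_add, map_add, hu, hv]
  map_comp_comul := by
    have h0 : (Coalgebra.comul : C →ₗ[ℂ] _) = LinearMap.id ∘ₗ Coalgebra.comul := by simp
    calc map (TensorProduct.assoc ℂ C D E).toLinearMap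
            (TensorProduct.assoc ℂ C D E).toLinearMap ∘ₗ
          (Coalgebra.comul : (C ⊗[ℂ] D) ⊗[ℂ] E →ₗ[ℂ] _)
        = map (TensorProduct.assoc ℂ C D E).toLinearMap
            (TensorProduct.assoc ℂ C D E).toLinearMap ∘ₗ
          (tensorTensorTensorComm ℂ (C ⊗[ℂ] D) (C ⊗[ℂ] D) E E).toLinearMap ∘ₗ
          map (tensorTensorTensorComm ℂ C C D D).toLinearMap LinearMap.id ∘ₗ
          map (map Coalgebra.comul Coalgebra.comul) Coalgebra.comul := by
          rw [tensor_comul_def, tensor_comul_def]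
          simp only [LinearMap.comp_assoc, ← TensorProduct.map_comp]
          simp
      _ = (tensorTensorTensorComm ℂ C C (D ⊗[ℂ] E) (D ⊗[ℂ] E)).toLinearMap ∘ₗ
          map LinearMap.id (tensorTensorTensorComm ℂ D D E E).toLinearMap ∘ₗ
          (TensorProduct.assoc ℂ (C ⊗[ℂ] C) (D ⊗[ℂ] D) (E ⊗[ℂ] E)).toLinearMap ∘ₗ
          map (map Coalgebra.comul Coalgebra.comul) Coalgebra.comul := by
          have h := congrArg
            (fun F : ((C ⊗[ℂ] C) ⊗[ℂ] (D ⊗[ℂ] D)) ⊗[ℂ] (E ⊗[ℂ] E) →ₗ[ℂ]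
                (C ⊗[ℂ] (D ⊗[ℂ] E)) ⊗[ℂ] (C ⊗[ℂ] (D ⊗[ℂ] E)) =>
              F ∘ₗ map (map (Coalgebra.comul (R := ℂ) (A := C))
                    (Coalgebra.comul (R := ℂ) (A := D)))
                  (Coalgebra.comul (R := ℂ) (A := E)))
            (GAS0 (C := C) (D := D) (E := E))
          simp only [LinearMap.comp_assoc] at h
          exact h.symm
      _ = (tensorTensorTensorComm ℂ C C (D ⊗[ℂ] E) (D ⊗[ℂ] E)).toLinearMap ∘ₗ
          map LinearMap.id (tensorTensorTensorComm ℂ D D E E).toLinearMap ∘ₗ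
          map Coalgebra.comul (map Coalgebra.comul Coalgebra.comul) ∘ₗ
          (TensorProduct.assoc ℂ C D E).toLinearMap := by
          rw [ASNAT]
      _ = _ := by
          rw [tensor_comul_def (M := C) (N := D ⊗[ℂ] E), tensor_comul_def (M := D) (N := E)]
          simp only [LinearMap.comp_assoc]
          congr 1
          rw [← LinearMap.comp_assoc, ← TensorProduct.map_comp, LinearMap.id_comp]

@[simp] lemma aCoalg_toLinearMap :
    (aCoalg (C := C) (D := D) (E := E)).toLinearMap
      = (TensorProduct.assoc ℂ C D E).toLinearMap := rfl

end CoalgHoms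


section HopfCore

variable {A : Type*} [CommRing A] [HopfAlgebra ℂ A]

lemma mul'_tensorAA :
    LinearMap.mul' ℂ (A ⊗[ℂ] A)
      = map (LinearMap.mul' ℂ A) (LinearMap.mul' ℂ A) ∘ₗ
        (tensorTensorTensorComm ℂ A A A A).toLinearMap := by
  ext a b x y
  simp [Algebra.TensorProduct.tmul_mul_tmul]

/-- multiplication as a coalgebra morphism -/
def mulCoalgHom : A ⊗[ℂ] A →ₗc[ℂ] A where
  toLinearMap := LinearMap.mul' ℂ A
  counit_comp := by
    rw [tensor_counit_def]
    apply TensorProduct.ext'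
    intro a b
    simp
  map_comp_comul := by
    apply TensorProduct.ext'
    intro a b
    have h1 : (Coalgebra.comul : A ⊗[ℂ] A →ₗ[ℂ] _) (a ⊗ₜ[ℂ] b)
        = (tensorTensorTensorComm ℂ A A A A)
            (Coalgebra.comul a ⊗ₜ[ℂ] Coalgebra.comul b) := rfl
    simp only [LinearMap.comp_apply, h1, LinearMap.mul'_apply]
    rw [Bialgebra.comul_mul]
    have h2 := LinearMap.congr_fun (mul'_tensorAA (A := A))
      ((Coalgebra.comul a : A ⊗[ℂ] A) ⊗ₜ[ℂ] (Coalgebra.comul b : A ⊗[ℂ] A))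
    simp only [LinearMap.comp_apply, LinearMap.mul'_apply, LinearEquiv.coe_coe] at h2
    exact h2.symm

@[simp] lemma mulCoalgHom_toLinearMap :
    (mulCoalgHom (A := A)).toLinearMap = LinearMap.mul' ℂ A := rfl

lemma id_coalgHom_toLinearMap :
    (CoalgHom.id ℂ A).toLinearMap = LinearMap.id := rfl

namespace Hopf2Cocycle

variable (c : Hopf2Cocycle A)

lemma mulJ_eq_cw : c.mulJ = cw (LinearMap.mul' ℂ A) c.J := rfl

theorem mul'_eq_cw_mulJ : LinearMap.mul' ℂ A = cw c.mulJ c.Jinv := by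
  conv_rhs => rw [mulJ_eq_cw, cw_cw, c.conv_right_inv, cw_counit]

lemma mul_assoc_aux :
    LinearMap.mul' ℂ A ∘ₗ map (LinearMap.mul' ℂ A) (LinearMap.id : A →ₗ[ℂ] A)
      = LinearMap.mul' ℂ A ∘ₗ map (LinearMap.id : A →ₗ[ℂ] A) (LinearMap.mul' ℂ A) ∘ₗ
        (TensorProduct.assoc ℂ A A A).toLinearMap := by
  ext a b x
  simp [mul_assoc]

theorem mulJ_assoc :
    c.mulJ ∘ₗ map c.mulJ (LinearMap.id : A →ₗ[ℂ] A)
      = c.mulJ ∘ₗ map (LinearMap.id : A →ₗ[ℂ] A) c.mulJ ∘ₗ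
        (TensorProduct.assoc ℂ A A A).toLinearMap := by
  have hL : c.mulJ ∘ₗ map c.mulJ (LinearMap.id : A →ₗ[ℂ] A)
      = cw (LinearMap.mul' ℂ A ∘ₗ map (LinearMap.mul' ℂ A) LinearMap.id)
          (conv (c.J ∘ₗ map (LinearMap.mul' ℂ A) LinearMap.id)
                (LinearMap.mul' ℂ ℂ ∘ₗ map c.J Coalgebra.counit)) := by
    conv_lhs => rw [mulJ_eq_cw, map_cw_id, comp_cw]
    rw [show map (LinearMap.mul' ℂ A) (LinearMap.id : A →ₗ[ℂ] A)
        = (tMap mulCoalgHom (CoalgHom.id ℂ A)).toLinearMap by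
      rw [tMap_toLinearMap, mulCoalgHom_toLinearMap, id_coalgHom_toLinearMap]]
    rw [cw_comp_coalgHom, cw_cw]
  have hR : c.mulJ ∘ₗ map (LinearMap.id : A →ₗ[ℂ] A) c.mulJ ∘ₗ
        (TensorProduct.assoc ℂ A A A).toLinearMap
      = cw ((LinearMap.mul' ℂ A ∘ₗ map LinearMap.id (LinearMap.mul' ℂ A)) ∘ₗ
              (TensorProduct.assoc ℂ A A A).toLinearMap)
          (conv ((c.J ∘ₗ map LinearMap.id (LinearMap.mul' ℂ A)) ∘ₗ
              (TensorProduct.assoc ℂ A A A).toLinearMap)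
            ((LinearMap.mul' ℂ ℂ ∘ₗ map Coalgebra.counit c.J) ∘ₗ
              (TensorProduct.assoc ℂ A A A).toLinearMap)) := by
    conv_lhs => rw [mulJ_eq_cw, map_id_cw, ← LinearMap.comp_assoc, comp_cw]
    rw [show map (LinearMap.id : A →ₗ[ℂ] A) (LinearMap.mul' ℂ A)
        = (tMap (CoalgHom.id ℂ A) mulCoalgHom).toLinearMap by
      rw [tMap_toLinearMap, mulCoalgHom_toLinearMap, id_coalgHom_toLinearMap]]
    rw [cw_comp_coalgHom, cw_cw]
    rw [show (TensorProduct.assoc ℂ A A A).toLinearMap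
        = (aCoalg (C := A) (D := A) (E := A)).toLinearMap from rfl]
    rw [cw_comp_coalgHom, conv_comp_coalgHom]
  rw [hL, hR]
  have hc := c.cocycle
  simp only [LinearMap.comp_assoc] at hc ⊢
  rw [show (LinearMap.mul' ℂ A) ∘ₗ map (LinearMap.mul' ℂ A) (LinearMap.id : A →ₗ[ℂ] A)
     = LinearMap.mul' ℂ A ∘ₗ map (LinearMap.id : A →ₗ[ℂ] A) (LinearMap.mul' ℂ A) ∘ₗ
        (TensorProduct.assoc ℂ A A A).toLinearMap from mul_assoc_aux]
  rw [hc]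

lemma sum_counit_smul_left {C : Type*} [AddCommGroup C] [Module ℂ C] [Coalgebra ℂ C]
    {x : C} {ι : Type*} (r : Coalgebra.Repr ℂ x ι) :
    ∑ i ∈ r.index, Coalgebra.counit (R := ℂ) (r.right i) • r.left i = x := by
  have h2 := congrArg (TensorProduct.rid ℂ C) (Coalgebra.sum_tmul_counit_eq r)
  rw [map_sum] at h2
  simp only [TensorProduct.rid_tmul, one_smul] at h2
  exact h2

lemma sum_counit_smul_right {C : Type*} [AddCommGroup C] [Module ℂ C] [Coalgebra ℂ C]
    {x : C} {ι : Type*} (r : Coalgebra.Repr ℂ x ι) :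
    ∑ i ∈ r.index, Coalgebra.counit (R := ℂ) (r.left i) • r.right i = x := by
  have h2 := congrArg (TensorProduct.lid ℂ C) (Coalgebra.sum_counit_tmul_eq r)
  rw [map_sum] at h2
  simp only [TensorProduct.lid_tmul, one_smul] at h2
  exact h2

lemma mulJ_one_left (a : A) : c.mulJ ((1 : A) ⊗ₜ[ℂ] a) = a := by
  have r := Coalgebra.Repr.arbitrary ℂ a
  have h1 : (Coalgebra.comul ((1 : A) ⊗ₜ[ℂ] a) : (A ⊗[ℂ] A) ⊗[ℂ] (A ⊗[ℂ] A))
      = (tensorTensorTensorComm ℂ A A A A)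
          (((1:A) ⊗ₜ[ℂ] (1:A)) ⊗ₜ[ℂ] (Coalgebra.comul a)) := by
    rw [show (Coalgebra.comul ((1 : A) ⊗ₜ[ℂ] a) : (A ⊗[ℂ] A) ⊗[ℂ] (A ⊗[ℂ] A))
        = (tensorTensorTensorComm ℂ A A A A)
            ((Coalgebra.comul (1:A)) ⊗ₜ[ℂ] (Coalgebra.comul a)) from rfl,
      Bialgebra.comul_one, Algebra.TensorProduct.one_def]
  rw [Hopf2Cocycle.mulJ]
  simp only [LinearMap.comp_apply, h1, ← r.eq]
  rw [tmul_sum]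
  simp only [map_sum, tensorTensorTensorComm_tmul, map_tmul, LinearMap.mul'_apply, one_mul,
    LinearEquiv.coe_coe, TensorProduct.rid_tmul, c.norm_left]
  exact sum_counit_smul_left r

lemma mulJ_one_right (a : A) : c.mulJ (a ⊗ₜ[ℂ] (1 : A)) = a := by
  have r := Coalgebra.Repr.arbitrary ℂ a
  have h1 : (Coalgebra.comul (a ⊗ₜ[ℂ] (1 : A)) : (A ⊗[ℂ] A) ⊗[ℂ] (A ⊗[ℂ] A))
      = (tensorTensorTensorComm ℂ A A A A)
          ((Coalgebra.comul a) ⊗ₜ[ℂ] ((1:A) ⊗ₜ[ℂ] (1:A))) := by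
    rw [show (Coalgebra.comul (a ⊗ₜ[ℂ] (1:A)) : (A ⊗[ℂ] A) ⊗[ℂ] (A ⊗[ℂ] A))
        = (tensorTensorTensorComm ℂ A A A A)
            ((Coalgebra.comul a) ⊗ₜ[ℂ] (Coalgebra.comul (1:A))) from rfl,
      Bialgebra.comul_one, Algebra.TensorProduct.one_def]
  rw [Hopf2Cocycle.mulJ]
  simp only [LinearMap.comp_apply, h1, ← r.eq]
  rw [sum_tmul]
  simp only [map_sum, tensorTensorTensorComm_tmul, map_tmul, LinearMap.mul'_apply, mul_one,
    LinearEquiv.coe_coe, TensorProduct.rid_tmul, c.norm_right]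
  exact sum_counit_smul_left r

/-- expressing the ordinary product through the twisted one -/
lemma mul_eq_untwist (x w : A) :
    x * w = (TensorProduct.rid ℂ A)
      (map c.mulJ c.Jinv
        ((tensorTensorTensorComm ℂ A A A A)
          ((Coalgebra.comul x) ⊗ₜ[ℂ] (Coalgebra.comul w)))) := by
  have h := LinearMap.congr_fun (c.mul'_eq_cw_mulJ) (x ⊗ₜ[ℂ] w)
  simpa [cw, LinearMap.mul'_apply,
    show (Coalgebra.comul (x ⊗ₜ[ℂ] w) : (A ⊗[ℂ] A) ⊗[ℂ] (A ⊗[ℂ] A))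
      = (tensorTensorTensorComm ℂ A A A A)
          ((Coalgebra.comul x) ⊗ₜ[ℂ] (Coalgebra.comul w)) from rfl] using h

end Hopf2Cocycle

end HopfCore

end Infra


/-- Gauge equivalence of Hopf 2-cocycles, at the level of the underlying bilinear forms:
`J'(a ⊗ b) = Σ x(a₁) x(b₁) J(a₂ ⊗ b₂) x⁻¹(a₃b₃)` for some convolution-invertible
linear functional `x` with `x(1) = 1`. -/
def GaugeEquiv (J J' : A ⊗[ℂ] A →ₗ[ℂ] ℂ) : Prop :=
  ∃ x xinv : A →ₗ[ℂ] ℂ,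
    conv x xinv = Coalgebra.counit ∧ conv xinv x = Coalgebra.counit ∧
    x 1 = 1 ∧
    J' = conv (LinearMap.mul' ℂ ℂ ∘ₗ TensorProduct.map x x)
           (conv J (xinv ∘ₗ LinearMap.mul' ℂ A))

/-- A realization of the twisted algebra `A_J` as an honest (possibly noncommutative)
`ℂ`-algebra `B`: a linear isomorphism matching the twisted multiplication `·_J` with the
multiplication of `B` and preserving units. -/
structure TwistedModel (c : Hopf2Cocycle A) (B : Type*) [Ring B] [Algebra ℂ B] where
  e : A ≃ₗ[ℂ] B
  map_one : e 1 = 1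
  map_mul : ∀ a b : A, e (c.mulJ (a ⊗ₜ[ℂ] b)) = e a * e b

section Model

variable {A : Type*} [CommRing A] [HopfAlgebra ℂ A]

/-- type synonym carrying the twisted algebra structure -/
@[nolint unusedArguments]
def AJ (_c : Hopf2Cocycle A) : Type _ := A

namespace AJ

variable (c : Hopf2Cocycle A)

instance instAddCommGroup : AddCommGroup (AJ c) := inferInstanceAs (AddCommGroup A)
instance instModule : Module ℂ (AJ c) := inferInstanceAs (Module ℂ A)

/-- the identity, as a linear equivalence `A ≃ AJ c` -/
def of : A ≃ₗ[ℂ] AJ c := LinearEquiv.refl ℂ A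

instance instRing : Ring (AJ c) where
  __ := instAddCommGroup c
  mul x y := c.mulJ ((of c).symm x ⊗ₜ[ℂ] (of c).symm y)
  one := of c 1
  mul_assoc x y z := by
    have h := LinearMap.congr_fun c.mulJ_assoc
      ((((of c).symm x ⊗ₜ[ℂ] (of c).symm y) : A ⊗[ℂ] A) ⊗ₜ[ℂ] (of c).symm z)
    simp only [LinearMap.comp_apply, map_tmul, LinearMap.id_apply, LinearEquiv.coe_coe,
      TensorProduct.assoc_tmul] at h
    exact h
  one_mul x := c.mulJ_one_left _
  mul_one x := c.mulJ_one_right _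
  left_distrib x y z := by
    show c.mulJ _ = c.mulJ _ + c.mulJ _
    rw [map_add, tmul_add, map_add]
  right_distrib x y z := by
    show c.mulJ _ = c.mulJ _ + c.mulJ _
    rw [map_add, add_tmul, map_add]
  zero_mul x := by
    show c.mulJ _ = _
    rw [map_zero, zero_tmul, map_zero]
    rfl
  mul_zero x := by
    show c.mulJ _ = _
    rw [map_zero, tmul_zero, map_zero]
    rfl

instance instAlgebra : Algebra ℂ (AJ c) :=
  Algebra.ofModule
    (fun r x y => by
      show c.mulJ _ = r • c.mulJ _
      rw [map_smul, ← smul_tmul', map_smul])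
    (fun r x y => by
      show c.mulJ _ = r • c.mulJ _
      rw [map_smul, tmul_smul, map_smul])

/-- the tautological twisted model -/
def model : TwistedModel c (AJ c) where
  e := of c
  map_one := rfl
  map_mul a b := rfl

end AJ

end Model

section FG

variable {A : Type*} [CommRing A] [HopfAlgebra ℂ A]

/-- right contraction `x ⊗ y ↦ h(y) • x` -/
def conR (h : A →ₗ[ℂ] ℂ) : A ⊗[ℂ] A →ₗ[ℂ] A :=
  (TensorProduct.rid ℂ A).toLinearMap ∘ₗ h.lTensor A

/-- left contraction `x ⊗ y ↦ h(x) • y` -/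
def conL (h : A →ₗ[ℂ] ℂ) : A ⊗[ℂ] A →ₗ[ℂ] A :=
  (TensorProduct.lid ℂ A).toLinearMap ∘ₗ h.rTensor A

@[simp] lemma conR_tmul (h : A →ₗ[ℂ] ℂ) (x y : A) : conR h (x ⊗ₜ[ℂ] y) = h y • x := by
  simp [conR]

@[simp] lemma conL_tmul (h : A →ₗ[ℂ] ℂ) (x y : A) : conL h (x ⊗ₜ[ℂ] y) = h x • y := by
  simp [conL]

/-- `Lc f (a) = Σ f(a₁) a₂` -/
def Lc (f : A →ₗ[ℂ] ℂ) : A →ₗ[ℂ] A := conL f ∘ₗ Coalgebra.comul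

/-- `Ef f g (a) = Σ f(a₁) a₂ g(a₃)` -/
def Ef (f g : A →ₗ[ℂ] ℂ) : A →ₗ[ℂ] A := cw (Lc f) g

lemma conR_comul_eq_cw (h : A →ₗ[ℂ] ℂ) :
    conR h ∘ₗ Coalgebra.comul = cw (LinearMap.id : A →ₗ[ℂ] A) h := by
  rfl

lemma Lc_counit : Lc (Coalgebra.counit) = (LinearMap.id : A →ₗ[ℂ] A) := by
  rw [Lc, conL, LinearMap.comp_assoc, Coalgebra.rTensor_counit_comp_comul]
  ext a
  simp

lemma Ef_counit_counit : Ef (Coalgebra.counit) (Coalgebra.counit) = (LinearMap.id : A →ₗ[ℂ] A) := by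
  rw [Ef, cw_counit, Lc_counit]

lemma lid_natural {M P : Type*} [AddCommGroup M] [Module ℂ M] [AddCommGroup P] [Module ℂ P]
    (F : M →ₗ[ℂ] P) :
    F ∘ₗ (TensorProduct.lid ℂ M).toLinearMap
      = (TensorProduct.lid ℂ P).toLinearMap ∘ₗ F.lTensor ℂ := by
  apply TensorProduct.ext'
  intro x y
  simp

lemma GHL (f : A →ₗ[ℂ] ℂ) :
    (TensorProduct.lid ℂ (A ⊗[ℂ] A)).toLinearMap ∘ₗ f.rTensor (A ⊗[ℂ] A) ∘ₗ
      (TensorProduct.assoc ℂ A A A).toLinearMap = (conL f).rTensor A := by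
  ext x y z
  simp [smul_tmul']

/-- `Lc f` is a right comodule endomorphism -/
lemma H1 (f : A →ₗ[ℂ] ℂ) :
    Coalgebra.comul ∘ₗ Lc f = (Lc f).rTensor A ∘ₗ Coalgebra.comul := by
  rw [Lc, conL]
  calc (Coalgebra.comul : A →ₗ[ℂ] _) ∘ₗ
        ((TensorProduct.lid ℂ A).toLinearMap ∘ₗ f.rTensor A ∘ₗ Coalgebra.comul)
      = ((Coalgebra.comul : A →ₗ[ℂ] _) ∘ₗ (TensorProduct.lid ℂ A).toLinearMap) ∘ₗ
          f.rTensor A ∘ₗ Coalgebra.comul := by simp only [LinearMap.comp_assoc]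
    _ = (TensorProduct.lid ℂ (A ⊗[ℂ] A)).toLinearMap ∘ₗ
          ((Coalgebra.comul : A →ₗ[ℂ] _).lTensor ℂ ∘ₗ f.rTensor A) ∘ₗ
          Coalgebra.comul := by rw [lid_natural]; simp only [LinearMap.comp_assoc]
    _ = (TensorProduct.lid ℂ (A ⊗[ℂ] A)).toLinearMap ∘ₗ
          (f.rTensor (A ⊗[ℂ] A) ∘ₗ (Coalgebra.comul : A →ₗ[ℂ] _).lTensor A) ∘ₗ
          Coalgebra.comul := by rw [LinearMap.lTensor_comp_rTensor, LinearMap.rTensor_comp_lTensor]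
    _ = (TensorProduct.lid ℂ (A ⊗[ℂ] A)).toLinearMap ∘ₗ f.rTensor (A ⊗[ℂ] A) ∘ₗ
          ((Coalgebra.comul : A →ₗ[ℂ] _).lTensor A ∘ₗ Coalgebra.comul) := by
          simp only [LinearMap.comp_assoc]
    _ = ((TensorProduct.lid ℂ (A ⊗[ℂ] A)).toLinearMap ∘ₗ f.rTensor (A ⊗[ℂ] A) ∘ₗ
          (TensorProduct.assoc ℂ A A A).toLinearMap) ∘ₗ
          (Coalgebra.comul : A →ₗ[ℂ] _).rTensor A ∘ₗ Coalgebra.comul := by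
          rw [← Coalgebra.coassoc]; simp only [LinearMap.comp_assoc]
    _ = (conL f).rTensor A ∘ₗ (Coalgebra.comul : A →ₗ[ℂ] _).rTensor A ∘ₗ Coalgebra.comul := by
          rw [GHL]
    _ = _ := by rw [← LinearMap.comp_assoc, ← LinearMap.rTensor_comp, conL]

lemma FL0 (f h : A →ₗ[ℂ] ℂ) :
    h ∘ₗ (TensorProduct.lid ℂ A).toLinearMap ∘ₗ f.rTensor A
      = LinearMap.mul' ℂ ℂ ∘ₗ map f h := by
  apply TensorProduct.ext'
  intro x y
  simp

lemma FL (f h : A →ₗ[ℂ] ℂ) : h ∘ₗ Lc f = conv f h :=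
  LinearMap.ext fun a => LinearMap.congr_fun (FL0 f h) (Coalgebra.comul a)

lemma Lc_comp (f h : A →ₗ[ℂ] ℂ) : Lc h ∘ₗ Lc f = Lc (conv f h) := by
  calc Lc h ∘ₗ Lc f
      = (TensorProduct.lid ℂ A).toLinearMap ∘ₗ h.rTensor A ∘ₗ
          (Coalgebra.comul ∘ₗ Lc f) := by
        rw [Lc, conL]; simp only [LinearMap.comp_assoc]
    _ = (TensorProduct.lid ℂ A).toLinearMap ∘ₗ (h.rTensor A ∘ₗ (Lc f).rTensor A) ∘ₗ
          Coalgebra.comul := by rw [H1]; simp only [LinearMap.comp_assoc]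
    _ = (TensorProduct.lid ℂ A).toLinearMap ∘ₗ (h ∘ₗ Lc f).rTensor A ∘ₗ
          Coalgebra.comul := by rw [← LinearMap.rTensor_comp]
    _ = Lc (conv f h) := by rw [FL, Lc, conL, LinearMap.comp_assoc]

lemma cw_id_comp (h : A →ₗ[ℂ] ℂ) (k : A →ₗ[ℂ] A)
    (hk : Coalgebra.comul ∘ₗ k = k.rTensor A ∘ₗ Coalgebra.comul) :
    cw (LinearMap.id : A →ₗ[ℂ] A) h ∘ₗ k = cw k h := by
  rw [cw, cw]
  simp only [LinearMap.comp_assoc]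
  rw [hk]
  rw [show map (LinearMap.id : A →ₗ[ℂ] A) h ∘ₗ k.rTensor A ∘ₗ (Coalgebra.comul : A →ₗ[ℂ] _)
      = map k h ∘ₗ Coalgebra.comul by
    rw [← LinearMap.comp_assoc,
      show map (LinearMap.id : A →ₗ[ℂ] A) h ∘ₗ k.rTensor A = map k h by
        rw [LinearMap.rTensor, ← TensorProduct.map_comp]; simp]]

lemma F2gen (h g : A →ₗ[ℂ] ℂ) (k : A →ₗ[ℂ] A)
    (hk : Coalgebra.comul ∘ₗ k = k.rTensor A ∘ₗ Coalgebra.comul) :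
    cw (LinearMap.id : A →ₗ[ℂ] A) h ∘ₗ cw k g = cw k (conv h g) := by
  rw [comp_cw, cw_id_comp h k hk, cw_cw]

lemma F2 (f g h : A →ₗ[ℂ] ℂ) (a : A) :
    conR h (Coalgebra.comul (Ef f g a)) = Ef f (conv h g) a :=
  LinearMap.congr_fun (F2gen h g (Lc f) (H1 f)) a

lemma F3 (f g h : A →ₗ[ℂ] ℂ) (a : A) :
    conL h (Coalgebra.comul (Ef f g a)) = Ef (conv f h) g a := by
  have h1 : Lc h ∘ₗ Ef f g = Ef (conv f h) g := by
    rw [Ef, comp_cw, Lc_comp, Ef]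
  exact LinearMap.congr_fun h1 a

lemma cw_apply {M : Type*} [AddCommGroup M] [Module ℂ M]
    (g : A →ₗ[ℂ] M) (φ : A →ₗ[ℂ] ℂ) {x : A} {ι : Type*} (r : Coalgebra.Repr ℂ x ι) :
    cw g φ x = ∑ i ∈ r.index, φ (r.right i) • g (r.left i) := by
  rw [cw]
  simp only [LinearMap.comp_apply]
  rw [← r.eq, map_sum, map_sum]
  simp

/-- the subspace of `A ⊗ A` spanned by pure tensors from `U ⊗ V` -/
def TS (U V : Submodule ℂ A) : Submodule ℂ (A ⊗[ℂ] A) :=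
  Submodule.span ℂ (Set.image2 (· ⊗ₜ[ℂ] ·) (U : Set A) (V : Set A))

lemma tmul_mem_TS {U V : Submodule ℂ A} {u v : A} (hu : u ∈ U) (hv : v ∈ V) :
    u ⊗ₜ[ℂ] v ∈ TS U V :=
  Submodule.subset_span (Set.mem_image2_of_mem hu hv)

lemma TS_mono {U U' V V' : Submodule ℂ A} (hU : U ≤ U') (hV : V ≤ V') :
    TS U V ≤ TS U' V' :=
  Submodule.span_mono (Set.image2_subset hU hV)

/-- membership in `V ⊗ V` from contractions -/
lemma mem_TS_of_con {V : Submodule ℂ A} (hVfd : FiniteDimensional ℂ V) {z : A ⊗[ℂ] A}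
    (hr : ∀ h : A →ₗ[ℂ] ℂ, conR h z ∈ V) (hl : ∀ h : A →ₗ[ℂ] ℂ, conL h z ∈ V) :
    z ∈ TS V V := by
  classical
  let b := Module.Basis.ofVectorSpace ℂ A
  obtain ⟨S, hS⟩ := TensorProduct.exists_finset z
  set t := S.biUnion (fun p => (b.repr p.2).support) with ht
  have hsum : ∀ p ∈ S, ∑ j ∈ t, b.repr p.2 j • b j = p.2 := by
    intro p hp
    rw [← Finset.sum_subset (Finset.subset_biUnion_of_mem _ hp)
      (fun j _ hj => by rw [Finsupp.notMem_support_iff.mp hj, zero_smul])]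
    have h1 := b.linearCombination_repr p.2
    rwa [Finsupp.linearCombination_apply, Finsupp.sum] at h1
  have key : ∀ j, conR (b.coord j) z = ∑ p ∈ S, b.repr p.2 j • p.1 := by
    intro j
    rw [hS, map_sum]
    simp [Module.Basis.coord_apply]
  have hz : z = ∑ j ∈ t, conR (b.coord j) z ⊗ₜ[ℂ] b j := by
    conv_lhs => rw [hS]
    calc ∑ p ∈ S, p.1 ⊗ₜ[ℂ] p.2
        = ∑ p ∈ S, ∑ j ∈ t, (b.repr p.2 j • p.1) ⊗ₜ[ℂ] b j := by
          refine Finset.sum_congr rfl fun p hp => ?_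
          rw [show ∑ j ∈ t, (b.repr p.2 j • p.1) ⊗ₜ[ℂ] b j
              = p.1 ⊗ₜ[ℂ] (∑ j ∈ t, b.repr p.2 j • b j) by
            rw [tmul_sum]
            exact Finset.sum_congr rfl fun j _ => by rw [tmul_smul, smul_tmul']]
          rw [hsum p hp]
      _ = ∑ j ∈ t, (∑ p ∈ S, b.repr p.2 j • p.1) ⊗ₜ[ℂ] b j := by
          rw [Finset.sum_comm]
          exact Finset.sum_congr rfl fun j _ => by rw [sum_tmul]
      _ = ∑ j ∈ t, conR (b.coord j) z ⊗ₜ[ℂ] b j := by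
          exact Finset.sum_congr rfl fun j _ => by rw [key]
  let v := Module.finBasis ℂ ↥V
  have hext : ∀ m, ∃ g : A →ₗ[ℂ] ℂ, g ∘ₗ V.subtype = v.coord m := fun m =>
    LinearMap.exists_extend (v.coord m)
  choose gm hgm using hext
  have hval : ∀ m (x : A) (hx : x ∈ V), gm m x = v.coord m ⟨x, hx⟩ := by
    intro m x hx
    exact LinearMap.congr_fun (hgm m) ⟨x, hx⟩
  have hz2 : z = ∑ m, (v m : A) ⊗ₜ[ℂ] conL (gm m) z := by
    have hcl : ∀ m, conL (gm m) z = ∑ j ∈ t, gm m (conR (b.coord j) z) • b j := by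
      intro m
      conv_lhs => rw [hz]
      rw [map_sum]
      simp
    calc z = ∑ j ∈ t, conR (b.coord j) z ⊗ₜ[ℂ] b j := hz
      _ = ∑ j ∈ t, (∑ m, v.coord m ⟨conR (b.coord j) z, hr _⟩ • (v m : A)) ⊗ₜ[ℂ] b j := by
          refine Finset.sum_congr rfl fun j _ => ?_
          congr 1
          have h4 := congrArg (V.subtype) (v.sum_repr ⟨conR (b.coord j) z, hr _⟩)
          rw [map_sum] at h4
          simp only [Module.Basis.coord_apply]
          simpa using h4.symm
      _ = ∑ m, (v m : A) ⊗ₜ[ℂ] (∑ j ∈ t, v.coord m ⟨conR (b.coord j) z, hr _⟩ • b j) := by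
          calc ∑ j ∈ t, (∑ m, v.coord m ⟨conR (b.coord j) z, hr _⟩ • (v m : A)) ⊗ₜ[ℂ] b j
              = ∑ j ∈ t, ∑ m, (v.coord m ⟨conR (b.coord j) z, hr _⟩ • (v m : A)) ⊗ₜ[ℂ] b j :=
                Finset.sum_congr rfl fun j _ => by rw [sum_tmul]
            _ = ∑ m, ∑ j ∈ t, (v.coord m ⟨conR (b.coord j) z, hr _⟩ • (v m : A)) ⊗ₜ[ℂ] b j :=
                Finset.sum_comm
            _ = ∑ m, (v m : A) ⊗ₜ[ℂ] (∑ j ∈ t, v.coord m ⟨conR (b.coord j) z, hr _⟩ • b j) := by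
                refine Finset.sum_congr rfl fun m _ => ?_
                rw [tmul_sum]
                exact Finset.sum_congr rfl fun j _ => by rw [smul_tmul]
      _ = ∑ m, (v m : A) ⊗ₜ[ℂ] conL (gm m) z := by
          refine Finset.sum_congr rfl fun m _ => ?_
          rw [hcl m]
          congr 1
          exact Finset.sum_congr rfl fun j _ => by rw [hval m _ (hr _)]
  rw [hz2]
  exact sum_mem fun m _ => tmul_mem_TS (v m).2 (hl _)

/-- the coefficient space of `a` -/
def Vsp (a : A) : Submodule ℂ A :=
  Submodule.span ℂ {x | ∃ f g : A →ₗ[ℂ] ℂ, Ef f g a = x}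

lemma Ef_mem_Vsp (f g : A →ₗ[ℂ] ℂ) (a : A) : Ef f g a ∈ Vsp a :=
  Submodule.subset_span ⟨f, g, rfl⟩

lemma self_mem_Vsp (a : A) : a ∈ Vsp a := by
  have := Ef_mem_Vsp (Coalgebra.counit) (Coalgebra.counit) a
  rwa [Ef_counit_counit, LinearMap.id_apply] at this

lemma Vsp_fd (a : A) : FiniteDimensional ℂ (Vsp a) := by
  classical
  set r := Coalgebra.Repr.arbitrary ℂ a with hr
  set S : Finset A := r.index.biUnion
    (fun i => Finset.image (fun j => (Coalgebra.Repr.arbitrary ℂ (r.left i)).right j)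
      (Coalgebra.Repr.arbitrary ℂ (r.left i)).index) with hSdef
  have hle : Vsp a ≤ Submodule.span ℂ (S : Set A) := by
    rw [Vsp, Submodule.span_le]
    rintro x ⟨f, g, rfl⟩
    rw [Ef, cw_apply (Lc f) g r]
    refine sum_mem fun i hi => Submodule.smul_mem _ _ ?_
    have hLc : Lc f (r.left i)
        = ∑ j ∈ (Coalgebra.Repr.arbitrary ℂ (r.left i)).index,
            f ((Coalgebra.Repr.arbitrary ℂ (r.left i)).left j) •
              (Coalgebra.Repr.arbitrary ℂ (r.left i)).right j := by
      rw [Lc, LinearMap.comp_apply, ← (Coalgebra.Repr.arbitrary ℂ (r.left i)).eq, map_sum]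
      simp
    rw [hLc]
    refine sum_mem fun j hj => Submodule.smul_mem _ _ (Submodule.subset_span ?_)
    exact Finset.mem_coe.mpr
      (Finset.mem_biUnion.mpr ⟨i, hi, Finset.mem_image_of_mem _ hj⟩)
  exact Submodule.finiteDimensional_of_le hle

lemma comul_Vsp_le (a : A) {x : A} (hx : x ∈ Vsp a) :
    Coalgebra.comul x ∈ TS (Vsp a) (Vsp a) := by
  induction hx using Submodule.span_induction with
  | mem x h =>
    obtain ⟨f, g, rfl⟩ := h
    exact mem_TS_of_con (Vsp_fd a)
      (fun h => by rw [F2]; exact Ef_mem_Vsp _ _ _)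
      (fun h => by rw [F3]; exact Ef_mem_Vsp _ _ _)
  | zero => simp only [map_zero]; exact Submodule.zero_mem _
  | add x y hx hy ihx ihy => rw [map_add]; exact Submodule.add_mem _ ihx ihy
  | smul c x hx ih => rw [map_smul]; exact Submodule.smul_mem _ _ ih

lemma TS_mul_TS (U V U' V' : Submodule ℂ A) :
    TS U V * TS U' V' ≤ TS (U * U') (V * V') := by
  rw [Submodule.mul_le]
  intro x hx
  induction hx using Submodule.span_induction with
  | mem x hmem =>
    obtain ⟨u, hu, v, hv, rfl⟩ := hmem
    intro y hy
    induction hy using Submodule.span_induction with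
    | mem y hmem' =>
      obtain ⟨u', hu', v', hv', rfl⟩ := hmem'
      rw [Algebra.TensorProduct.tmul_mul_tmul]
      exact tmul_mem_TS (Submodule.mul_mem_mul hu hu') (Submodule.mul_mem_mul hv hv')
    | zero => rw [mul_zero]; exact zero_mem _
    | add y z _ _ ihy ihz => rw [mul_add]; exact add_mem ihy ihz
    | smul r y _ ih => rw [mul_smul_comm]; exact Submodule.smul_mem _ _ ih
  | zero => intro y _; rw [zero_mul]; exact zero_mem _
  | add x z _ _ ihx ihz => intro y hy; rw [add_mul]; exact add_mem (ihx y hy) (ihz y hy)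
  | smul r x _ ih => intro y hy; rw [smul_mul_assoc]; exact Submodule.smul_mem _ _ (ih y hy)

lemma one_mem_one' : (1 : A) ∈ (1 : Submodule ℂ A) := by
  rw [Submodule.one_eq_span]
  exact Submodule.subset_span rfl

lemma comul_one_eq : (Coalgebra.comul (1 : A) : A ⊗[ℂ] A) = (1 : A) ⊗ₜ[ℂ] (1 : A) := by
  rw [Bialgebra.comul_one, Algebra.TensorProduct.one_def]

lemma map_comul_pow (W : Submodule ℂ A)
    (hW : Submodule.map (Coalgebra.comul : A →ₗ[ℂ] A ⊗[ℂ] A) W ≤ TS W W) (n : ℕ) :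
    Submodule.map (Coalgebra.comul : A →ₗ[ℂ] A ⊗[ℂ] A) (W ^ n) ≤ TS (W ^ n) (W ^ n) := by
  induction n with
  | zero =>
    rw [pow_zero, Submodule.one_eq_span, Submodule.map_span, Submodule.span_le]
    rintro z ⟨y, hy, rfl⟩
    rw [Set.mem_singleton_iff] at hy
    subst hy
    rw [comul_one_eq]
    rw [← Submodule.one_eq_span]
    exact tmul_mem_TS one_mem_one' one_mem_one'
  | succ n ih =>
    rw [pow_succ]
    rw [show (Coalgebra.comul : A →ₗ[ℂ] A ⊗[ℂ] A)
        = (Bialgebra.comulAlgHom ℂ A).toLinearMap from rfl] at ih hW ⊢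
    rw [Submodule.map_mul]
    exact le_trans (mul_le_mul' ih hW) (TS_mul_TS _ _ _ _)

lemma list_prod_mem_pow (W : Submodule ℂ A) (l : List A) (hl : ∀ x ∈ l, x ∈ W) :
    l.prod ∈ W ^ l.length := by
  induction l with
  | nil =>
    rw [List.prod_nil, List.length_nil, pow_zero]
    exact one_mem_one'
  | cons x xs ih =>
    rw [List.prod_cons, List.length_cons, pow_succ']
    exact Submodule.mul_mem_mul (hl x List.mem_cons_self)
      (ih fun y hy => hl y (List.mem_cons_of_mem _ hy))

end FG


universe u

/-- If `A` is a finitely generated commutative Hopf `ℂ`-algebra and `J` is a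
Hopf 2-cocycle for `A`, then the twisted algebra `A_J` is a finitely generated `ℂ`-algebra. -/
theorem statement2 (A : Type u) [CommRing A] [HopfAlgebra ℂ A]
    (hfg : Algebra.FiniteType ℂ A) (c : Hopf2Cocycle A) :
    ∃ (B : Type u) (_ : Ring B) (_ : Algebra ℂ B) (_ : TwistedModel c B),
      Algebra.FiniteType ℂ B := by
  classical
  refine ⟨AJ c, inferInstance, inferInstance, AJ.model c, ?_⟩
  obtain ⟨s, hs⟩ := hfg.out
  haveI hVspFD : ∀ a : A, FiniteDimensional ℂ (Vsp a) := Vsp_fd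
  set W : Submodule ℂ A := (ℂ ∙ (1 : A)) ⊔ s.sup (fun a => Vsp a) with hWdef
  haveI hfd : FiniteDimensional ℂ W := by infer_instance
  have h1W : (1 : A) ∈ W := Submodule.mem_sup_left (Submodule.mem_span_singleton_self 1)
  have hVW : ∀ a ∈ s, Vsp a ≤ W := fun a ha => (Finset.le_sup ha).trans le_sup_right
  have hsW : (s : Set A) ⊆ (W : Set A) := fun a ha => hVW a ha (self_mem_Vsp a)
  have hWcom : Submodule.map (Coalgebra.comul : A →ₗ[ℂ] A ⊗[ℂ] A) W ≤ TS W W := by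
    rw [Submodule.map_le_iff_le_comap, hWdef]
    refine sup_le ?_ ?_
    · rw [Submodule.span_le]
      intro x hx
      rw [Set.mem_singleton_iff] at hx
      subst hx
      simp only [SetLike.mem_coe, Submodule.mem_comap]
      rw [comul_one_eq]
      exact tmul_mem_TS h1W h1W
    · refine Finset.sup_le fun a ha => ?_
      intro x hx
      simp only [SetLike.mem_coe, Submodule.mem_comap]
      exact TS_mono (hVW a ha) (hVW a ha) (comul_Vsp_le a hx)
  have hpow := map_comul_pow W hWcom
  obtain ⟨F, hF⟩ : W.FG := (Submodule.fg_iff_finiteDimensional W).mpr hfd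
  set e := AJ.of c with he
  set S : Subalgebra ℂ (AJ c) := Algebra.adjoin ℂ (⇑e '' (F : Set A)) with hSdef
  have hW_S : ∀ w ∈ W, e w ∈ S := by
    intro w hw
    rw [← hF] at hw
    have h2 : Submodule.map (e : A →ₗ[ℂ] AJ c) (Submodule.span ℂ (F : Set A))
        ≤ Subalgebra.toSubmodule S := by
      rw [Submodule.map_span, Submodule.span_le]
      exact fun x hx => Algebra.subset_adjoin hx
    exact h2 (Submodule.mem_map_of_mem hw)
  -- the main bilinear step
  have hbil : ∀ n, (∀ x ∈ W ^ n, e x ∈ S) →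
      ∀ p ∈ TS (W ^ n) (W ^ n), ∀ q ∈ TS W W,
        e ((TensorProduct.rid ℂ A)
          (map c.mulJ c.Jinv ((tensorTensorTensorComm ℂ A A A A) (p ⊗ₜ[ℂ] q)))) ∈ S := by
    intro n ihn p hp
    induction hp using Submodule.span_induction with
    | mem p hmem =>
      obtain ⟨x₁, hx₁, x₂, hx₂, rfl⟩ := hmem
      intro q hq
      induction hq using Submodule.span_induction with
      | mem q hmem' =>
        obtain ⟨w₁, hw₁, w₂, hw₂, rfl⟩ := hmem'
        rw [tensorTensorTensorComm_tmul]
        simp only [map_tmul, LinearEquiv.coe_coe, TensorProduct.rid_tmul, map_smul]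
        refine S.smul_mem ?_ _
        rw [show e (c.mulJ (x₁ ⊗ₜ[ℂ] w₁)) = e x₁ * e w₁ from rfl]
        exact S.mul_mem (ihn x₁ hx₁) (hW_S w₁ hw₁)
      | zero =>
        rw [tmul_zero]
        simp only [map_zero]
        exact S.toSubmodule.zero_mem
      | add q₁ q₂ _ _ ih₁ ih₂ =>
        rw [tmul_add]
        simp only [map_add]
        exact S.add_mem ih₁ ih₂
      | smul r q _ ih =>
        rw [tmul_smul]
        simp only [map_smul]
        exact S.smul_mem ih r
    | zero =>
      intro q _
      rw [zero_tmul]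
      simp only [map_zero]
      exact S.toSubmodule.zero_mem
    | add p₁ p₂ _ _ ih₁ ih₂ =>
      intro q hq
      rw [add_tmul]
      simp only [map_add]
      exact S.add_mem (ih₁ q hq) (ih₂ q hq)
    | smul r p _ ih =>
      intro q hq
      rw [← smul_tmul']
      simp only [map_smul]
      exact S.smul_mem (ih q hq) r
  have key : ∀ n, ∀ x ∈ W ^ n, e x ∈ S := by
    intro n
    induction n with
    | zero =>
      intro x hx
      rw [pow_zero, Submodule.one_eq_span] at hx
      obtain ⟨r, rfl⟩ := Submodule.mem_span_singleton.mp hx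
      rw [map_smul]
      exact S.smul_mem (by rw [show e (1 : A) = 1 from rfl]; exact S.one_mem) r
    | succ n ih =>
      intro x hx
      rw [pow_succ] at hx
      refine Submodule.mul_induction_on hx ?_ ?_
      · intro u hu w hw
        rw [c.mul_eq_untwist u w]
        exact hbil n ih (Coalgebra.comul u) (hpow n (Submodule.mem_map_of_mem hu))
          (Coalgebra.comul w) (hWcom (Submodule.mem_map_of_mem hw))
      · intro u v ihu ihv
        rw [map_add]
        exact S.add_mem ihu ihv
  have hT : ∀ a : A, e a ∈ S := by
    intro a
    have htop : Algebra.adjoin ℂ (W : Set A) = ⊤ :=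
      top_unique (hs ▸ Algebra.adjoin_mono hsW)
    have ha2 : a ∈ Submodule.span ℂ ((Submonoid.closure (W : Set A) : Submonoid A) : Set A) := by
      rw [← Algebra.adjoin_eq_span]
      show a ∈ Subalgebra.toSubmodule (Algebra.adjoin ℂ (W : Set A))
      rw [htop]
      trivial
    induction ha2 using Submodule.span_induction with
    | mem x hx =>
      obtain ⟨l, hl, rfl⟩ := Submonoid.exists_list_of_mem_closure hx
      exact key l.length _ (list_prod_mem_pow W l hl)
    | zero => rw [map_zero]; exact S.toSubmodule.zero_mem
    | add x y _ _ ihx ihy => rw [map_add]; exact S.add_mem ihx ihy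
    | smul r x _ ih => rw [map_smul]; exact S.smul_mem ih r
  refine ⟨⟨F.image ⇑e, ?_⟩⟩
  rw [Finset.coe_image, ← hSdef]
  refine top_unique fun b _ => ?_
  have := hT (e.symm b)
  rwa [LinearEquiv.apply_symm_apply] at this

end Twisting
end
end

section
/- Let A be a commutative Hopf ℂ-algebra, let J be a Hopf 2-cocycle for A, and let C ⊆ A be a subcoalgebra (a subspace with Δ(C) ⊆ C ⊗ C) that generates A as a ℂ-algebra. Then C generates the twisted algebra A_J as a ℂ-algebra. -/
set_option maxHeartbeats 1000000
set_option synthInstance.maxHeartbeats 400000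


open TensorProduct

noncomputable section

namespace Twisting

variable (A : Type*) [CommRing A] [HopfAlgebra ℂ A]

variable {A}

private theorem ttt_nat {M N P Q M' N' P' Q' : Type*}
    [AddCommGroup M] [AddCommGroup N] [AddCommGroup P] [AddCommGroup Q]
    [AddCommGroup M'] [AddCommGroup N'] [AddCommGroup P'] [AddCommGroup Q']
    [Module ℂ M] [Module ℂ N] [Module ℂ P] [Module ℂ Q]
    [Module ℂ M'] [Module ℂ N'] [Module ℂ P'] [Module ℂ Q']
    (f : M →ₗ[ℂ] M') (g : N →ₗ[ℂ] N') (h : P →ₗ[ℂ] P') (k : Q →ₗ[ℂ] Q') :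
    TensorProduct.map (TensorProduct.map f h) (TensorProduct.map g k)
        ∘ₗ (tensorTensorTensorComm ℂ M N P Q).toLinearMap
      = (tensorTensorTensorComm ℂ M' N' P' Q').toLinearMap
        ∘ₗ TensorProduct.map (TensorProduct.map f g) (TensorProduct.map h k) := by
  ext m n p q; simp

private theorem instCoalgebraStruct_comul' :
    Coalgebra.comul (R := ℂ) (A := A ⊗[ℂ] A)
      = (tensorTensorTensorComm ℂ A A A A).toLinearMap
          ∘ₗ TensorProduct.map Coalgebra.comul Coalgebra.comul := by
  rw [TensorProduct.comul_def]
  rfl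

private theorem instCoalgebraStruct_counit' :
    Coalgebra.counit (R := ℂ) (A := A ⊗[ℂ] A)
      = LinearMap.mul' ℂ ℂ ∘ₗ TensorProduct.map Coalgebra.counit Coalgebra.counit := by
  ext x y
  simp [mul_comm]

private theorem untwist_general (J Jinv : A ⊗[ℂ] A →ₗ[ℂ] ℂ)
    (hJ : LinearMap.mul' ℂ ℂ ∘ₗ TensorProduct.map J Jinv ∘ₗ Coalgebra.comul
        = Coalgebra.counit (R := ℂ) (A := A ⊗[ℂ] A)) :
    (TensorProduct.rid ℂ A).toLinearMap
      ∘ₗ TensorProduct.map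
          ((TensorProduct.rid ℂ A).toLinearMap ∘ₗ TensorProduct.map (LinearMap.mul' ℂ A) J
            ∘ₗ Coalgebra.comul) Jinv
      ∘ₗ Coalgebra.comul
    = LinearMap.mul' ℂ A := by
  rw [instCoalgebraStruct_comul']
  have e1 : ((TensorProduct.rid ℂ A).toLinearMap ∘ₗ TensorProduct.map (LinearMap.mul' ℂ A) J
        ∘ₗ (tensorTensorTensorComm ℂ A A A A).toLinearMap ∘ₗ TensorProduct.map Coalgebra.comul Coalgebra.comul)
      = ((TensorProduct.rid ℂ A).toLinearMap ∘ₗ TensorProduct.map (LinearMap.mul' ℂ A) J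
        ∘ₗ (tensorTensorTensorComm ℂ A A A A).toLinearMap) ∘ₗ TensorProduct.map Coalgebra.comul Coalgebra.comul := by
    simp only [LinearMap.comp_assoc]
  rw [e1]
  have e2 : TensorProduct.map (((TensorProduct.rid ℂ A).toLinearMap
        ∘ₗ TensorProduct.map (LinearMap.mul' ℂ A) J
        ∘ₗ (tensorTensorTensorComm ℂ A A A A).toLinearMap)
          ∘ₗ TensorProduct.map Coalgebra.comul Coalgebra.comul) Jinv
      = TensorProduct.map ((TensorProduct.rid ℂ A).toLinearMap
          ∘ₗ TensorProduct.map (LinearMap.mul' ℂ A) J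
          ∘ₗ (tensorTensorTensorComm ℂ A A A A).toLinearMap) Jinv
        ∘ₗ TensorProduct.map (TensorProduct.map Coalgebra.comul Coalgebra.comul)
            (TensorProduct.map LinearMap.id LinearMap.id) := by
    rw [← TensorProduct.map_comp, TensorProduct.map_id, LinearMap.comp_id]
  rw [e2]
  simp only [LinearMap.comp_assoc]
  -- naturality 1
  have h1 := ttt_nat (Coalgebra.comul (R := ℂ) (A := A)) (LinearMap.id : A →ₗ[ℂ] A)
      (Coalgebra.comul (R := ℂ) (A := A)) (LinearMap.id : A →ₗ[ℂ] A)
  have h1t := congrArg (fun F => F ∘ₗ TensorProduct.map (Coalgebra.comul (R := ℂ) (A := A))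
      (Coalgebra.comul (R := ℂ) (A := A))) h1
  simp only [LinearMap.comp_assoc] at h1t
  rw [h1t]
  -- coassociativity
  have h2 : TensorProduct.map (Coalgebra.comul (R := ℂ) (A := A)) (LinearMap.id : A →ₗ[ℂ] A)
        ∘ₗ Coalgebra.comul
      = (TensorProduct.assoc ℂ A A A).symm.toLinearMap
        ∘ₗ (TensorProduct.map LinearMap.id (Coalgebra.comul (R := ℂ) (A := A))
          ∘ₗ Coalgebra.comul) :=
    (Coalgebra.coassoc_symm (R := ℂ) (A := A)).symm
  have h2t : TensorProduct.map
        (TensorProduct.map (Coalgebra.comul (R := ℂ) (A := A)) LinearMap.id)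
        (TensorProduct.map (Coalgebra.comul (R := ℂ) (A := A)) LinearMap.id)
        ∘ₗ TensorProduct.map (Coalgebra.comul (R := ℂ) (A := A)) (Coalgebra.comul (R := ℂ) (A := A))
      = TensorProduct.map (TensorProduct.assoc ℂ A A A).symm.toLinearMap
          (TensorProduct.assoc ℂ A A A).symm.toLinearMap
        ∘ₗ TensorProduct.map
          (TensorProduct.map LinearMap.id (Coalgebra.comul (R := ℂ) (A := A)) ∘ₗ Coalgebra.comul)
          (TensorProduct.map LinearMap.id (Coalgebra.comul (R := ℂ) (A := A)) ∘ₗ Coalgebra.comul) := by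
    rw [← TensorProduct.map_comp, ← TensorProduct.map_comp, h2]
  rw [h2t]
  -- Theta = Theta' (pure identity)
  have h6 :
      (TensorProduct.rid ℂ A).toLinearMap
        ∘ₗ TensorProduct.map ((TensorProduct.rid ℂ A).toLinearMap
              ∘ₗ TensorProduct.map (LinearMap.mul' ℂ A) J
              ∘ₗ (tensorTensorTensorComm ℂ A A A A).toLinearMap) Jinv
        ∘ₗ (tensorTensorTensorComm ℂ (A ⊗[ℂ] A) A (A ⊗[ℂ] A) A).toLinearMap
        ∘ₗ TensorProduct.map (TensorProduct.assoc ℂ A A A).symm.toLinearMap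
              (TensorProduct.assoc ℂ A A A).symm.toLinearMap
      = (TensorProduct.rid ℂ A).toLinearMap
        ∘ₗ TensorProduct.map (LinearMap.mul' ℂ A)
              (LinearMap.mul' ℂ ℂ ∘ₗ TensorProduct.map J Jinv
                ∘ₗ (tensorTensorTensorComm ℂ A A A A).toLinearMap)
        ∘ₗ (tensorTensorTensorComm ℂ A (A ⊗[ℂ] A) A (A ⊗[ℂ] A)).toLinearMap := by
    ext x1 x2 x3 y1 y2 y3
    simp [smul_smul, mul_comm]
  have h6t := congrArg (fun F => F ∘ₗ TensorProduct.map
      (TensorProduct.map (LinearMap.id : A →ₗ[ℂ] A) Coalgebra.comul ∘ₗ Coalgebra.comul)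
      (TensorProduct.map (LinearMap.id : A →ₗ[ℂ] A) Coalgebra.comul ∘ₗ Coalgebra.comul)) h6
  simp only [LinearMap.comp_assoc] at h6t
  rw [h6t]
  have h7 : TensorProduct.map
        (TensorProduct.map (LinearMap.id : A →ₗ[ℂ] A) Coalgebra.comul ∘ₗ Coalgebra.comul)
        (TensorProduct.map (LinearMap.id : A →ₗ[ℂ] A) Coalgebra.comul ∘ₗ Coalgebra.comul)
      = TensorProduct.map
          (TensorProduct.map (LinearMap.id : A →ₗ[ℂ] A) Coalgebra.comul)
          (TensorProduct.map (LinearMap.id : A →ₗ[ℂ] A) Coalgebra.comul)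
        ∘ₗ TensorProduct.map (Coalgebra.comul (R := ℂ) (A := A)) Coalgebra.comul := by
    rw [← TensorProduct.map_comp]
  rw [h7]
  -- naturality 2 (reversed)
  have h8 := (ttt_nat (LinearMap.id : A →ₗ[ℂ] A) (Coalgebra.comul (R := ℂ) (A := A))
      (LinearMap.id : A →ₗ[ℂ] A) (Coalgebra.comul (R := ℂ) (A := A))).symm
  have h8t := congrArg (fun F => F ∘ₗ TensorProduct.map (Coalgebra.comul (R := ℂ) (A := A))
      (Coalgebra.comul (R := ℂ) (A := A))) h8
  simp only [LinearMap.comp_assoc] at h8t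
  rw [h8t]
  -- merge maps
  have h9 : TensorProduct.map (LinearMap.mul' ℂ A)
        (LinearMap.mul' ℂ ℂ ∘ₗ TensorProduct.map J Jinv
          ∘ₗ (tensorTensorTensorComm ℂ A A A A).toLinearMap)
        ∘ₗ TensorProduct.map (TensorProduct.map (LinearMap.id : A →ₗ[ℂ] A) LinearMap.id)
            (TensorProduct.map (Coalgebra.comul (R := ℂ) (A := A)) Coalgebra.comul)
      = TensorProduct.map (LinearMap.mul' ℂ A)
          ((LinearMap.mul' ℂ ℂ ∘ₗ TensorProduct.map J Jinv
            ∘ₗ (tensorTensorTensorComm ℂ A A A A).toLinearMap)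
            ∘ₗ TensorProduct.map (Coalgebra.comul (R := ℂ) (A := A)) Coalgebra.comul) := by
    rw [← TensorProduct.map_comp, TensorProduct.map_id, LinearMap.comp_id]
  have h9t := congrArg (fun F => F ∘ₗ ((tensorTensorTensorComm ℂ A A A A).toLinearMap
      ∘ₗ TensorProduct.map (Coalgebra.comul (R := ℂ) (A := A)) Coalgebra.comul)) h9
  simp only [LinearMap.comp_assoc] at h9t
  rw [h9t]
  -- use the convolution inverse property
  have h10 : LinearMap.mul' ℂ ℂ ∘ₗ TensorProduct.map J Jinv
        ∘ₗ (tensorTensorTensorComm ℂ A A A A).toLinearMap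
        ∘ₗ TensorProduct.map (Coalgebra.comul (R := ℂ) (A := A)) Coalgebra.comul
      = LinearMap.mul' ℂ ℂ ∘ₗ TensorProduct.map (Coalgebra.counit (R := ℂ) (A := A))
          (Coalgebra.counit (R := ℂ) (A := A)) := by
    rw [← instCoalgebraStruct_comul', hJ, instCoalgebraStruct_counit']
  rw [h10]
  have h11 : TensorProduct.map (LinearMap.mul' ℂ A)
        (LinearMap.mul' ℂ ℂ ∘ₗ TensorProduct.map (Coalgebra.counit (R := ℂ) (A := A))
          Coalgebra.counit)
      = TensorProduct.map (LinearMap.mul' ℂ A) (LinearMap.mul' ℂ ℂ)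
        ∘ₗ TensorProduct.map (TensorProduct.map (LinearMap.id : A →ₗ[ℂ] A) (LinearMap.id : A →ₗ[ℂ] A))
            (TensorProduct.map (Coalgebra.counit (R := ℂ) (A := A))
              (Coalgebra.counit (R := ℂ) (A := A))) := by
    rw [← TensorProduct.map_comp, TensorProduct.map_id, LinearMap.comp_id]
  have h11t := congrArg (fun F => F ∘ₗ ((tensorTensorTensorComm ℂ A A A A).toLinearMap
      ∘ₗ TensorProduct.map (Coalgebra.comul (R := ℂ) (A := A)) Coalgebra.comul)) h11
  simp only [LinearMap.comp_assoc] at h11t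
  rw [h11t]
  -- naturality 3
  have h12 := ttt_nat (LinearMap.id : A →ₗ[ℂ] A) (Coalgebra.counit (R := ℂ) (A := A))
      (LinearMap.id : A →ₗ[ℂ] A) (Coalgebra.counit (R := ℂ) (A := A))
  have h12t := congrArg (fun F => F ∘ₗ TensorProduct.map (Coalgebra.comul (R := ℂ) (A := A))
      (Coalgebra.comul (R := ℂ) (A := A))) h12
  simp only [LinearMap.comp_assoc] at h12t
  rw [h12t]
  -- counit law
  have h13 : TensorProduct.map (TensorProduct.map (LinearMap.id : A →ₗ[ℂ] A) Coalgebra.counit)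
        (TensorProduct.map (LinearMap.id : A →ₗ[ℂ] A) Coalgebra.counit)
        ∘ₗ TensorProduct.map (Coalgebra.comul (R := ℂ) (A := A)) Coalgebra.comul
      = TensorProduct.map ((TensorProduct.mk ℂ A ℂ).flip 1) ((TensorProduct.mk ℂ A ℂ).flip 1) := by
    rw [← TensorProduct.map_comp]
    congr 1 <;> exact Coalgebra.lTensor_counit_comp_comul (R := ℂ)
  rw [h13]
  ext x y
  simp


private theorem comul_tmul' (x y : A) :
    Coalgebra.comul (R := ℂ) (x ⊗ₜ[ℂ] y)
      = tensorTensorTensorComm ℂ A A A A (Coalgebra.comul x ⊗ₜ[ℂ] Coalgebra.comul y) := by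
  rw [instCoalgebraStruct_comul']
  simp

private theorem range_mul (D E : Submodule ℂ A) {u v : A ⊗[ℂ] A}
    (hu : u ∈ LinearMap.range (TensorProduct.map D.subtype D.subtype))
    (hv : v ∈ LinearMap.range (TensorProduct.map E.subtype E.subtype)) :
    u * v ∈ LinearMap.range (TensorProduct.map (D * E).subtype (D * E).subtype) := by
  obtain ⟨u', rfl⟩ := hu
  obtain ⟨v', rfl⟩ := hv
  induction u' using TensorProduct.induction_on with
  | zero => simp
  | add a b ha hb => rw [map_add, add_mul]; exact add_mem ha hb
  | tmul d1 d2 =>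
    induction v' using TensorProduct.induction_on with
    | zero => simp
    | add a b ha hb => rw [map_add, mul_add]; exact add_mem ha hb
    | tmul e1 e2 =>
      refine ⟨(⟨(d1 : A) * e1, Submodule.mul_mem_mul d1.2 e1.2⟩ : ↥(D * E)) ⊗ₜ[ℂ]
        (⟨(d2 : A) * e2, Submodule.mul_mem_mul d2.2 e2.2⟩ : ↥(D * E)), ?_⟩
      simp [Algebra.TensorProduct.tmul_mul_tmul]

private theorem comul_mem_mul (D E : Submodule ℂ A)
    (hD : ∀ d ∈ D, Coalgebra.comul (R := ℂ) d
      ∈ LinearMap.range (TensorProduct.map D.subtype D.subtype))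
    (hE : ∀ e ∈ E, Coalgebra.comul (R := ℂ) e
      ∈ LinearMap.range (TensorProduct.map E.subtype E.subtype)) :
    ∀ z ∈ D * E, Coalgebra.comul (R := ℂ) z
      ∈ LinearMap.range (TensorProduct.map (D * E).subtype (D * E).subtype) := by
  intro z hz
  refine Submodule.mul_induction_on hz (fun a ha b hb => ?_) (fun x y hx hy => ?_)
  · rw [Bialgebra.comul_mul]
    exact range_mul D E (hD a ha) (hE b hb)
  · rw [map_add]; exact add_mem hx hy

private theorem mul_eq (c : Hopf2Cocycle A) (x y : A) :
    x * y = (TensorProduct.rid ℂ A) (TensorProduct.map c.mulJ c.Jinv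
      (Coalgebra.comul (x ⊗ₜ[ℂ] y))) := by
  have h := LinearMap.congr_fun (untwist_general c.J c.Jinv c.conv_right_inv) (x ⊗ₜ[ℂ] y)
  simp only [LinearMap.comp_apply, LinearMap.mul'_apply, LinearEquiv.coe_coe] at h
  exact h.symm

private theorem mulJ_mem (c : Hopf2Cocycle A) {P D E : Submodule ℂ A} (hD : D ≤ P) (hE : E ≤ P)
    (hmul : ∀ x ∈ P, ∀ y ∈ P, c.mulJ (x ⊗ₜ[ℂ] y) ∈ P) {x y : A}
    (hx : Coalgebra.comul (R := ℂ) x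
      ∈ LinearMap.range (TensorProduct.map D.subtype D.subtype))
    (hy : Coalgebra.comul (R := ℂ) y
      ∈ LinearMap.range (TensorProduct.map E.subtype E.subtype)) :
    x * y ∈ P := by
  obtain ⟨u, hu⟩ := hx
  obtain ⟨v, hv⟩ := hy
  rw [mul_eq c x y, comul_tmul', ← hu, ← hv]
  clear hu hv
  induction u using TensorProduct.induction_on with
  | zero =>
    simp only [map_zero, zero_tmul]
    exact zero_mem P
  | add a b ha hb =>
    simp only [map_add, add_tmul]
    exact add_mem ha hb
  | tmul d1 d2 =>
    induction v using TensorProduct.induction_on with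
    | zero =>
      simp only [map_zero, tmul_zero]
      exact zero_mem P
    | add a b ha hb =>
      simp only [map_add, tmul_add]
      exact add_mem ha hb
    | tmul e1 e2 =>
      simp only [TensorProduct.map_tmul, tensorTensorTensorComm_tmul, TensorProduct.rid_tmul,
        Submodule.coe_subtype]
      exact Submodule.smul_mem _ _ (hmul _ (hD d1.2) _ (hE e1.2))

/-- If a subcoalgebra `C` of a commutative Hopf `ℂ`-algebra `A` generates
`A` as a `ℂ`-algebra, then `C` generates the twisted algebra `A_J` as a `ℂ`-algebra:
every subspace of `A` containing `C` and `1` and closed under the twisted product `·_J`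
is all of `A`. -/
theorem statement3 (A : Type*) [CommRing A] [HopfAlgebra ℂ A] (c : Hopf2Cocycle A)
    (C : Submodule ℂ A)
    (hC : ∀ x ∈ C, Coalgebra.comul (R := ℂ) x ∈
      LinearMap.range (TensorProduct.map C.subtype C.subtype))
    (hgen : Algebra.adjoin ℂ (C : Set A) = ⊤) :
    ∀ P : Submodule ℂ A, (C : Set A) ⊆ (P : Set A) → (1 : A) ∈ P →
      (∀ x ∈ P, ∀ y ∈ P, c.mulJ (x ⊗ₜ[ℂ] y) ∈ P) → P = ⊤ := by
  intro P hCP honeP hmulP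
  have hclosure : ∀ x ∈ Submonoid.closure (C : Set A),
      ∃ D : Submodule ℂ A, D ≤ P ∧ x ∈ D ∧
        ∀ d ∈ D, Coalgebra.comul (R := ℂ) d
          ∈ LinearMap.range (TensorProduct.map D.subtype D.subtype) := by
    intro x hx
    induction hx using Submonoid.closure_induction with
    | mem y hy => exact ⟨C, hCP, hy, hC⟩
    | one =>
      refine ⟨Submodule.span ℂ {1}, ?_, Submodule.mem_span_singleton_self 1, ?_⟩
      · rw [Submodule.span_le]
        simpa using honeP
      · intro d hd
        rw [Submodule.mem_span_singleton] at hd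
        obtain ⟨z, rfl⟩ := hd
        refine ⟨z • ((⟨1, Submodule.mem_span_singleton_self 1⟩ :
            ↥(Submodule.span ℂ ({1} : Set A))) ⊗ₜ[ℂ]
          (⟨1, Submodule.mem_span_singleton_self 1⟩ :
            ↥(Submodule.span ℂ ({1} : Set A)))), ?_⟩
        simp [Algebra.TensorProduct.one_def]
    | mul x y hx hy ihx ihy =>
      obtain ⟨D, hDP, hxD, hDc⟩ := ihx
      obtain ⟨E, hEP, hyE, hEc⟩ := ihy
      refine ⟨D * E, ?_, Submodule.mul_mem_mul hxD hyE, comul_mem_mul D E hDc hEc⟩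
      rw [Submodule.mul_le]
      intro m hm n hn
      exact mulJ_mem c hDP hEP hmulP (hDc m hm) (hEc n hn)
  have hspan : Submodule.span ℂ ((Submonoid.closure (C : Set A) : Submonoid A) : Set A) = ⊤ := by
    rw [← Algebra.adjoin_eq_span, hgen]
    rfl
  rw [eq_top_iff]
  intro x _
  have hx : x ∈ Submodule.span ℂ ((Submonoid.closure (C : Set A) : Submonoid A) : Set A) := by
    rw [hspan]; trivial
  refine Submodule.span_induction (fun y hy => ?_) (Submodule.zero_mem P)
    (fun a b _ _ ha hb => add_mem ha hb) (fun z a _ ha => Submodule.smul_mem P z ha) hx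
  obtain ⟨D, hDP, hyD, _⟩ := hclosure y hy
  exact hDP hyD


end Twisting
end
end

section
/- Let A be a commutative Hopf ℂ-algebra and let J be a minimal Hopf 2-cocycle for A. Then the center of the twisted algebra A_J is trivial, i.e. equals ℂ·1. -/
open TensorProduct

noncomputable section

namespace Twisting

variable (A : Type*) [CommRing A] [HopfAlgebra ℂ A]

variable {A}

section Aux
open Coalgebra

variable {A : Type*} [CommRing A] [HopfAlgebra ℂ A]

lemma comul_tmul_repr {ι₁ ι₂ : Type*} (a b : A) (ra : Coalgebra.Repr ℂ a ι₁) (rb : Coalgebra.Repr ℂ b ι₂) :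
    Coalgebra.comul (a ⊗ₜ[ℂ] b) =
      ∑ i ∈ ra.index, ∑ j ∈ rb.index,
        (ra.left i ⊗ₜ[ℂ] rb.left j) ⊗ₜ[ℂ] (ra.right i ⊗ₜ[ℂ] rb.right j) := by
  have h : Coalgebra.comul (a ⊗ₜ[ℂ] b)
      = TensorProduct.tensorTensorTensorComm ℂ A A A A
          (Coalgebra.comul a ⊗ₜ[ℂ] Coalgebra.comul b) := rfl
  rw [h, ← ra.eq, ← rb.eq]
  simp [TensorProduct.sum_tmul, TensorProduct.tmul_sum, map_sum]
  rw [Finset.sum_comm]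

lemma counit_tmul (a b : A) :
    (Coalgebra.counit (a ⊗ₜ[ℂ] b) : ℂ) = Coalgebra.counit a * Coalgebra.counit b := by
  rw [TensorProduct.counit_tmul, smul_eq_mul, mul_comm]

lemma conv_tmul {ι₁ ι₂ : Type*} (F G : A ⊗[ℂ] A →ₗ[ℂ] ℂ) (a b : A)
    (ra : Coalgebra.Repr ℂ a ι₁) (rb : Coalgebra.Repr ℂ b ι₂) :
    conv F G (a ⊗ₜ[ℂ] b) =
      ∑ i ∈ ra.index, ∑ j ∈ rb.index,
        F (ra.left i ⊗ₜ[ℂ] rb.left j) * G (ra.right i ⊗ₜ[ℂ] rb.right j) := by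
  simp only [conv, LinearMap.comp_apply, comul_tmul_repr a b ra rb, map_sum,
    TensorProduct.map_tmul, LinearMap.mul'_apply]

def oneRepr : Coalgebra.Repr ℂ (1 : A) Unit where
  index := Finset.univ
  left := fun _ => 1
  right := fun _ => 1
  eq := by simp [Algebra.TensorProduct.one_def]

lemma sum_counit_smul {ι₁ : Type*} (a : A) (ra : Coalgebra.Repr ℂ a ι₁) :
    ∑ i ∈ ra.index, (Coalgebra.counit (ra.left i) : ℂ) • ra.right i = a := by
  have h := Coalgebra.sum_counit_tmul_eq (R := ℂ) ra
  apply_fun (TensorProduct.lid ℂ A) at h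
  simpa [map_sum, -Coalgebra.sum_counit_tmul_eq] using h

lemma sum_smul_counit {ι₁ : Type*} (a : A) (ra : Coalgebra.Repr ℂ a ι₁) :
    ∑ i ∈ ra.index, (Coalgebra.counit (ra.right i) : ℂ) • ra.left i = a := by
  have h := Coalgebra.sum_tmul_counit_eq (R := ℂ) ra
  apply_fun (TensorProduct.rid ℂ A) at h
  simpa [map_sum, -Coalgebra.sum_tmul_counit_eq] using h

lemma sum_counit_mul {ι₁ : Type*} (a : A) (ra : Coalgebra.Repr ℂ a ι₁) :
    ∑ i ∈ ra.index, (Coalgebra.counit (ra.left i) : ℂ) * Coalgebra.counit (ra.right i)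
      = Coalgebra.counit a := by
  calc ∑ i ∈ ra.index, (Coalgebra.counit (ra.left i) : ℂ) * Coalgebra.counit (ra.right i)
      = Coalgebra.counit (∑ i ∈ ra.index,
          (Coalgebra.counit (ra.left i) : ℂ) • ra.right i) := by
        simp [map_sum, smul_eq_mul]
    _ = Coalgebra.counit a := by rw [sum_counit_smul a ra]

namespace Hopf2Cocycle

variable (c : Hopf2Cocycle A)

lemma mulJ_tmul {ι₁ ι₂ : Type*} (a b : A) (ra : Coalgebra.Repr ℂ a ι₁) (rb : Coalgebra.Repr ℂ b ι₂) :
    c.mulJ (a ⊗ₜ[ℂ] b) =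
      ∑ i ∈ ra.index, ∑ j ∈ rb.index,
        c.J (ra.right i ⊗ₜ[ℂ] rb.right j) • (ra.left i * rb.left j) := by
  simp only [mulJ, LinearMap.comp_apply, LinearEquiv.coe_coe, comul_tmul_repr a b ra rb,
    map_sum, TensorProduct.map_tmul, LinearMap.mul'_apply, TensorProduct.rid_tmul]

lemma Jinv_tmul_one (a : A) : c.Jinv (a ⊗ₜ[ℂ] 1) = Coalgebra.counit a := by
  have h := congrArg (fun F : A ⊗[ℂ] A →ₗ[ℂ] ℂ => F (a ⊗ₜ[ℂ] 1)) c.conv_right_inv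
  simp only [conv_tmul c.J c.Jinv a 1 (Coalgebra.Repr.arbitrary ℂ a) oneRepr] at h
  set ra := Coalgebra.Repr.arbitrary ℂ a
  have h2 : ∑ i ∈ ra.index, (c.J (ra.left i ⊗ₜ[ℂ] (1 : A))) * c.Jinv (ra.right i ⊗ₜ[ℂ] 1)
      = c.Jinv (a ⊗ₜ[ℂ] 1) := by
    calc ∑ i ∈ ra.index, (c.J (ra.left i ⊗ₜ[ℂ] (1 : A))) * c.Jinv (ra.right i ⊗ₜ[ℂ] 1)
        = c.Jinv ((∑ i ∈ ra.index,
            (Coalgebra.counit (ra.left i) : ℂ) • ra.right i) ⊗ₜ[ℂ] 1) := by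
          simp [c.norm_right, TensorProduct.sum_tmul, map_sum, ← TensorProduct.smul_tmul',
            smul_eq_mul]
      _ = c.Jinv (a ⊗ₜ[ℂ] 1) := by rw [sum_counit_smul a ra]
  simp only [oneRepr, Finset.univ_unique, Finset.sum_singleton, Finset.sum_const,
    Finset.card_singleton, one_smul] at h
  rw [counit_tmul, Bialgebra.counit_one, mul_one] at h
  rw [← h2]
  convert h using 2

end Hopf2Cocycle
end Aux


section Aux2
open Coalgebra

variable {A : Type*} [CommRing A] [HopfAlgebra ℂ A]

namespace Hopf2Cocycle

variable (c : Hopf2Cocycle A)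

lemma RJ_one_tmul (b : A) : c.RJ ((1 : A) ⊗ₜ[ℂ] b) = Coalgebra.counit b := by
  set rb := Coalgebra.Repr.arbitrary ℂ b
  rw [RJ, conv_tmul _ c.J 1 b oneRepr rb]
  simp only [oneRepr, Finset.univ_unique, Finset.sum_singleton, LinearMap.comp_apply,
    LinearEquiv.coe_coe, TensorProduct.comm_tmul]
  calc ∑ j ∈ rb.index, c.Jinv (rb.left j ⊗ₜ[ℂ] 1) * c.J ((1:A) ⊗ₜ[ℂ] rb.right j)
      = ∑ j ∈ rb.index, (Coalgebra.counit (rb.left j) : ℂ) * Coalgebra.counit (rb.right j) := by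
        simp [c.Jinv_tmul_one, c.norm_left]
    _ = Coalgebra.counit b := sum_counit_mul b rb

lemma mulJ_one_tmul (b : A) : c.mulJ ((1 : A) ⊗ₜ[ℂ] b) = b := by
  set rb := Coalgebra.Repr.arbitrary ℂ b
  rw [mulJ_tmul c 1 b oneRepr rb]
  simp only [oneRepr, Finset.univ_unique, Finset.sum_singleton, one_mul]
  calc ∑ j ∈ rb.index, c.J ((1:A) ⊗ₜ[ℂ] rb.right j) • rb.left j
      = ∑ j ∈ rb.index, (Coalgebra.counit (rb.right j) : ℂ) • rb.left j := by
        simp [c.norm_left]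
    _ = b := sum_smul_counit b rb

lemma mulJ_tmul_one (b : A) : c.mulJ (b ⊗ₜ[ℂ] (1 : A)) = b := by
  set rb := Coalgebra.Repr.arbitrary ℂ b
  rw [mulJ_tmul c b 1 rb oneRepr]
  simp only [oneRepr, Finset.univ_unique, Finset.sum_singleton, mul_one]
  calc ∑ j ∈ rb.index, c.J (rb.right j ⊗ₜ[ℂ] (1:A)) • rb.left j
      = ∑ j ∈ rb.index, (Coalgebra.counit (rb.right j) : ℂ) • rb.left j := by
        simp [c.norm_right]
    _ = b := sum_smul_counit b rb

end Hopf2Cocycle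

lemma collapse {ι₁ : Type*} (Ω : A) (r : Coalgebra.Repr ℂ Ω ι₁) (r2 : (m : ι₁) → Coalgebra.Repr ℂ (r.right m) (A × A)) :
    ∑ m ∈ r.index, ∑ n ∈ (r2 m).index,
      (HopfAlgebra.antipode (R := ℂ) (r.left m) * (r2 m).left n) ⊗ₜ[ℂ] (r2 m).right n
      = (1 : A) ⊗ₜ[ℂ] Ω := by
  classical
  set r1 : (m : ι₁) → Coalgebra.Repr ℂ (r.left m) (A × A) := fun m => Coalgebra.Repr.arbitrary ℂ (r.left m)
  have hco := Coalgebra.sum_tmul_tmul_eq (R := ℂ) r r1 r2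
  set Φ : A ⊗[ℂ] (A ⊗[ℂ] A) →ₗ[ℂ] A ⊗[ℂ] A :=
    TensorProduct.map (LinearMap.mul' ℂ A ∘ₗ (HopfAlgebra.antipode (R := ℂ)).rTensor A)
        LinearMap.id ∘ₗ (TensorProduct.assoc ℂ A A A).symm.toLinearMap with hΦ
  have hΦt : ∀ x y z : A, Φ (x ⊗ₜ[ℂ] (y ⊗ₜ[ℂ] z))
      = (HopfAlgebra.antipode (R := ℂ) x * y) ⊗ₜ[ℂ] z := by
    intro x y z
    simp [hΦ]
  have h := congrArg Φ hco
  simp only [map_sum, hΦt] at h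
  calc ∑ m ∈ r.index, ∑ n ∈ (r2 m).index,
        (HopfAlgebra.antipode (R := ℂ) (r.left m) * (r2 m).left n) ⊗ₜ[ℂ] (r2 m).right n
      = ∑ m ∈ r.index, ∑ n ∈ (r1 m).index,
        (HopfAlgebra.antipode (R := ℂ) ((r1 m).left n) * (r1 m).right n) ⊗ₜ[ℂ] r.right m := h.symm
    _ = ∑ m ∈ r.index, ((Coalgebra.counit (r.left m) : ℂ) • (1 : A)) ⊗ₜ[ℂ] r.right m := by
        refine Finset.sum_congr rfl fun m _ => ?_
        rw [← TensorProduct.sum_tmul, HopfAlgebra.sum_antipode_mul_eq_smul (r1 m)]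
    _ = (1 : A) ⊗ₜ[ℂ] ∑ m ∈ r.index, (Coalgebra.counit (r.left m) : ℂ) • r.right m := by
        rw [TensorProduct.tmul_sum]
        exact Finset.sum_congr rfl fun m _ => TensorProduct.smul_tmul _ _ _
    _ = (1 : A) ⊗ₜ[ℂ] Ω := by rw [sum_counit_smul Ω r]

end Aux2

/-- If `J` is a minimal Hopf 2-cocycle for a commutative Hopf `ℂ`-algebra
`A`, then the center of the twisted algebra `A_J` is trivial, i.e. equals `ℂ·1`. -/
theorem statement4 (A : Type*) [CommRing A] [HopfAlgebra ℂ A] (c : Hopf2Cocycle A)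
    (hmin : c.Minimal) :
    {φ : A | ∀ ψ : A, c.mulJ (φ ⊗ₜ[ℂ] ψ) = c.mulJ (ψ ⊗ₜ[ℂ] φ)}
      = Set.range (fun z : ℂ => z • (1 : A)) := by
  classical
  ext φ
  simp only [Set.mem_setOf_eq, Set.mem_range]
  constructor
  · intro hφ
    set S : A →ₗ[ℂ] A := HopfAlgebra.antipode (R := ℂ) with hS
    set K : A ⊗[ℂ] A →ₗ[ℂ] ℂ :=
      c.J - c.J ∘ₗ (TensorProduct.comm ℂ A A).toLinearMap with hK
    have hKt : ∀ x y : A, K (x ⊗ₜ[ℂ] y) = c.J (x ⊗ₜ[ℂ] y) - c.J (y ⊗ₜ[ℂ] x) := by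
      intro x y
      simp [hK]
    set rφ := Coalgebra.Repr.arbitrary ℂ φ with hrφ
    have hD : ∀ (χ : A) (rχ : Coalgebra.Repr ℂ χ (A × A)),
        ∑ n ∈ rχ.index, ∑ i ∈ rφ.index,
          K (rφ.right i ⊗ₜ[ℂ] rχ.right n) • (rφ.left i * rχ.left n) = (0 : A) := by
      intro χ rχ
      have h0 : c.mulJ (φ ⊗ₜ[ℂ] χ) - c.mulJ (χ ⊗ₜ[ℂ] φ) = 0 := by
        rw [hφ χ, sub_self]
      rw [c.mulJ_tmul φ χ rφ rχ, c.mulJ_tmul χ φ rχ rφ] at h0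
      calc ∑ n ∈ rχ.index, ∑ i ∈ rφ.index,
            K (rφ.right i ⊗ₜ[ℂ] rχ.right n) • (rφ.left i * rχ.left n)
          = (∑ n ∈ rχ.index, ∑ i ∈ rφ.index,
              c.J (rφ.right i ⊗ₜ[ℂ] rχ.right n) • (rφ.left i * rχ.left n))
            - ∑ n ∈ rχ.index, ∑ i ∈ rφ.index,
              c.J (rχ.right n ⊗ₜ[ℂ] rφ.right i) • (rχ.left n * rφ.left i) := by
            rw [← Finset.sum_sub_distrib]
            refine Finset.sum_congr rfl fun n _ => ?_
            rw [← Finset.sum_sub_distrib]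
            refine Finset.sum_congr rfl fun i _ => ?_
            rw [hKt, sub_smul, mul_comm (rχ.left n) (rφ.left i)]
        _ = (∑ i ∈ rφ.index, ∑ n ∈ rχ.index,
              c.J (rφ.right i ⊗ₜ[ℂ] rχ.right n) • (rφ.left i * rχ.left n))
            - ∑ n ∈ rχ.index, ∑ i ∈ rφ.index,
              c.J (rχ.right n ⊗ₜ[ℂ] rφ.right i) • (rχ.left n * rφ.left i) := by
            rw [Finset.sum_comm]
        _ = 0 := h0
    have hgoal : ∀ (ψ : A) (rψ : Coalgebra.Repr ℂ ψ (A × A)),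
        ∑ j ∈ rψ.index, ∑ i ∈ rφ.index,
          c.Jinv (rψ.left j ⊗ₜ[ℂ] rφ.left i) * K (rφ.right i ⊗ₜ[ℂ] rψ.right j) = 0 := by
      intro ψ rψ
      set rΩ : (j : A × A) → Coalgebra.Repr ℂ (rψ.right j) (A × A) :=
        fun j => Coalgebra.Repr.arbitrary ℂ (rψ.right j) with hrΩ
      set r2 : (j : A × A) → (m : A × A) → Coalgebra.Repr ℂ ((rΩ j).right m) (A × A) :=
        fun j m => Coalgebra.Repr.arbitrary ℂ ((rΩ j).right m) with hr2
      have hE : ∀ j, ∑ m ∈ (rΩ j).index, ∑ n ∈ (r2 j m).index,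
          (S ((rΩ j).left m) * (r2 j m).left n) ⊗ₜ[ℂ] (r2 j m).right n
          = (1 : A) ⊗ₜ[ℂ] (rψ.right j) := fun j => collapse _ (rΩ j) (r2 j)
      set L : A × A → A × A → (A ⊗[ℂ] A →ₗ[ℂ] ℂ) := fun j i =>
        LinearMap.mul' ℂ ℂ ∘ₗ TensorProduct.map
          (c.Jinv ∘ₗ TensorProduct.mk ℂ A A (rψ.left j) ∘ₗ LinearMap.mulLeft ℂ (rφ.left i))
          (K ∘ₗ TensorProduct.mk ℂ A A (rφ.right i)) with hL
      have hLt : ∀ j i (v w : A), L j i (v ⊗ₜ[ℂ] w)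
          = c.Jinv (rψ.left j ⊗ₜ[ℂ] (rφ.left i * v)) * K (rφ.right i ⊗ₜ[ℂ] w) := by
        intro j i v w
        simp [hL]
      calc ∑ j ∈ rψ.index, ∑ i ∈ rφ.index,
            c.Jinv (rψ.left j ⊗ₜ[ℂ] rφ.left i) * K (rφ.right i ⊗ₜ[ℂ] rψ.right j)
          = ∑ j ∈ rψ.index, ∑ i ∈ rφ.index, L j i ((1 : A) ⊗ₜ[ℂ] rψ.right j) := by
            refine Finset.sum_congr rfl fun j _ => Finset.sum_congr rfl fun i _ => ?_
            rw [hLt, mul_one]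
        _ = ∑ j ∈ rψ.index, ∑ i ∈ rφ.index, ∑ m ∈ (rΩ j).index, ∑ n ∈ (r2 j m).index,
              c.Jinv (rψ.left j ⊗ₜ[ℂ]
                  (rφ.left i * (S ((rΩ j).left m) * (r2 j m).left n)))
                * K (rφ.right i ⊗ₜ[ℂ] (r2 j m).right n) := by
            refine Finset.sum_congr rfl fun j _ => Finset.sum_congr rfl fun i _ => ?_
            rw [← hE j, map_sum]
            refine Finset.sum_congr rfl fun m _ => ?_
            rw [map_sum]
            exact Finset.sum_congr rfl fun n _ => hLt j i _ _
        _ = ∑ j ∈ rψ.index, ∑ m ∈ (rΩ j).index,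
              (c.Jinv ∘ₗ TensorProduct.mk ℂ A A (rψ.left j)
                  ∘ₗ LinearMap.mulLeft ℂ (S ((rΩ j).left m)))
                (∑ n ∈ (r2 j m).index, ∑ i ∈ rφ.index,
                  K (rφ.right i ⊗ₜ[ℂ] (r2 j m).right n) • (rφ.left i * (r2 j m).left n)) := by
            refine Finset.sum_congr rfl fun j _ => ?_
            rw [Finset.sum_comm]
            refine Finset.sum_congr rfl fun m _ => ?_
            rw [map_sum, Finset.sum_comm]
            refine Finset.sum_congr rfl fun i _ => ?_
            rw [map_sum]
            refine Finset.sum_congr rfl fun n _ => ?_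
            simp only [map_smul, LinearMap.comp_apply, LinearMap.mulLeft_apply,
              TensorProduct.mk_apply, smul_eq_mul]
            rw [mul_left_comm, mul_comm]
        _ = 0 := by
            refine Finset.sum_eq_zero fun j _ => Finset.sum_eq_zero fun m _ => ?_
            rw [hD ((rΩ j).right m) (r2 j m), map_zero]
    have hRJ : ∀ ψ : A, c.RJ (φ ⊗ₜ[ℂ] ψ)
        = (Coalgebra.counit ψ : ℂ) * Coalgebra.counit φ := by
      intro ψ
      set rψ := Coalgebra.Repr.arbitrary ℂ ψ with hrψ
      have e1 : c.RJ (φ ⊗ₜ[ℂ] ψ)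
          = ∑ j ∈ rψ.index, ∑ i ∈ rφ.index,
              c.Jinv (rψ.left j ⊗ₜ[ℂ] rφ.left i) * c.J (rφ.right i ⊗ₜ[ℂ] rψ.right j) := by
        rw [Hopf2Cocycle.RJ, conv_tmul _ c.J φ ψ rφ rψ, Finset.sum_comm]
        refine Finset.sum_congr rfl fun j _ => Finset.sum_congr rfl fun i _ => ?_
        simp
      have e2 : conv c.Jinv c.J (ψ ⊗ₜ[ℂ] φ)
          = ∑ j ∈ rψ.index, ∑ i ∈ rφ.index,
              c.Jinv (rψ.left j ⊗ₜ[ℂ] rφ.left i) * c.J (rψ.right j ⊗ₜ[ℂ] rφ.right i) :=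
        conv_tmul c.Jinv c.J ψ φ rψ rφ
      have e3 : conv c.Jinv c.J (ψ ⊗ₜ[ℂ] φ)
          = (Coalgebra.counit ψ : ℂ) * Coalgebra.counit φ := by
        rw [c.conv_left_inv]; exact Twisting.counit_tmul ψ φ
      have e4 := hgoal ψ rψ
      have e5 : ∑ j ∈ rψ.index, ∑ i ∈ rφ.index,
          c.Jinv (rψ.left j ⊗ₜ[ℂ] rφ.left i) * K (rφ.right i ⊗ₜ[ℂ] rψ.right j)
          = c.RJ (φ ⊗ₜ[ℂ] ψ) - conv c.Jinv c.J (ψ ⊗ₜ[ℂ] φ) := by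
        rw [e1, e2, ← Finset.sum_sub_distrib]
        refine Finset.sum_congr rfl fun j _ => ?_
        rw [← Finset.sum_sub_distrib]
        refine Finset.sum_congr rfl fun i _ => ?_
        rw [hKt, mul_sub]
      rw [e4] at e5
      rw [← e3]
      exact sub_eq_zero.mp e5.symm
    have hz : ∀ b : A, c.RJ ((φ - (Coalgebra.counit φ : ℂ) • 1) ⊗ₜ[ℂ] b) = 0 := by
      intro b
      have ht : (φ - (Coalgebra.counit φ : ℂ) • 1) ⊗ₜ[ℂ] b
          = φ ⊗ₜ[ℂ] b - (Coalgebra.counit φ : ℂ) • ((1 : A) ⊗ₜ[ℂ] b) := by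
        rw [TensorProduct.sub_tmul, TensorProduct.smul_tmul']
      rw [ht, map_sub, map_smul, hRJ b, c.RJ_one_tmul b, smul_eq_mul]
      ring
    have hfin := hmin _ hz
    exact ⟨Coalgebra.counit φ, (sub_eq_zero.mp hfin).symm⟩
  · rintro ⟨z, rfl⟩ ψ
    have h1 : (z • (1 : A)) ⊗ₜ[ℂ] ψ = z • ((1 : A) ⊗ₜ[ℂ] ψ) :=
      (TensorProduct.smul_tmul' z (1 : A) ψ).symm
    have h2 : ψ ⊗ₜ[ℂ] (z • (1 : A)) = z • (ψ ⊗ₜ[ℂ] (1 : A)) :=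
      (TensorProduct.tmul_smul z ψ (1 : A))
    rw [h1, h2, map_smul, map_smul, c.mulJ_one_tmul, c.mulJ_tmul_one]

end Twisting
end
end

section
/- Let A be a commutative Hopf ℂ-algebra, let I be a Hopf ideal of A with quotient Hopf algebra B = A/I and quotient map π : A → B, let J̄ be any Hopf 2-cocycle for B, and let J = J̄ ∘ (π ⊗ π), a Hopf 2-cocycle for A. Then every element a ∈ A satisfying (id ⊗ π)(Δ(a)) = a ⊗ 1_B is central in the twisted algebra A_J. -/
open TensorProduct

noncomputable section

namespace Twisting

variable (A : Type*) [CommRing A] [HopfAlgebra ℂ A]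

variable {A}

/-- Let `π : A ↠ B` be a Hopf algebra quotient of a commutative Hopf
`ℂ`-algebra `A` (quotient by a Hopf ideal), let `J̄` be any Hopf 2-cocycle for `B` and
`J = J̄ ∘ (π ⊗ π)`.  Then every `B`-coinvariant element of `A` (i.e. every `a` with
`(id ⊗ π)(Δ a) = a ⊗ 1`) is central in the twisted algebra `A_J`. -/
theorem statement6 (A B : Type*) [CommRing A] [HopfAlgebra ℂ A] [CommRing B]
    [HopfAlgebra ℂ B]
    (π : A →ₐ[ℂ] B) (hsurj : Function.Surjective π)
    (hcomul : Coalgebra.comul (R := ℂ) ∘ₗ π.toLinearMap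
      = TensorProduct.map π.toLinearMap π.toLinearMap ∘ₗ Coalgebra.comul)
    (hcounit : Coalgebra.counit (R := ℂ) ∘ₗ π.toLinearMap = Coalgebra.counit)
    (hantipode : HopfAlgebra.antipode (R := ℂ) ∘ₗ π.toLinearMap
      = π.toLinearMap ∘ₗ HopfAlgebra.antipode (R := ℂ))
    (c' : Hopf2Cocycle B) (c : Hopf2Cocycle A)
    (hc : c.J = c'.J ∘ₗ TensorProduct.map π.toLinearMap π.toLinearMap) :
    ∀ a : A, TensorProduct.map (LinearMap.id : A →ₗ[ℂ] A) π.toLinearMap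
        (Coalgebra.comul (R := ℂ) a) = a ⊗ₜ[ℂ] (1 : B) →
      ∀ b : A, c.mulJ (a ⊗ₜ[ℂ] b) = c.mulJ (b ⊗ₜ[ℂ] a) := by
  intro a ha b
  classical
  have hcounit' : ∀ z : A, Coalgebra.counit (R := ℂ) (π z) = Coalgebra.counit (R := ℂ) z :=
    fun z => LinearMap.congr_fun hcounit z
  -- the big multiplication map and its factorization through (id ⊗ π)
  set M : (A ⊗[ℂ] A) ⊗[ℂ] (A ⊗[ℂ] A) →ₗ[ℂ] A :=
    (TensorProduct.rid ℂ A).toLinearMap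
      ∘ₗ TensorProduct.map (LinearMap.mul' ℂ A) c.J
      ∘ₗ (TensorProduct.tensorTensorTensorComm ℂ A A A A).toLinearMap with hM
  have hmulJ : ∀ x y : A, c.mulJ (x ⊗ₜ[ℂ] y)
      = M (Coalgebra.comul x ⊗ₜ[ℂ] Coalgebra.comul y) := by
    intro x y
    simp [Hopf2Cocycle.mulJ, hM, TensorProduct.comul_tmul, TensorProduct.AlgebraTensorModule.tensorTensorTensorComm_eq]
  -- first factorization : through (id ⊗ π) on the left factor
  set N₁ : (A ⊗[ℂ] B) ⊗[ℂ] (A ⊗[ℂ] A) →ₗ[ℂ] A :=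
    (TensorProduct.rid ℂ A).toLinearMap
      ∘ₗ TensorProduct.map (LinearMap.mul' ℂ A)
          (c'.J ∘ₗ TensorProduct.map LinearMap.id π.toLinearMap)
      ∘ₗ (TensorProduct.tensorTensorTensorComm ℂ A B A A).toLinearMap with hN₁
  have key₁ : M = N₁ ∘ₗ TensorProduct.map
      (TensorProduct.map LinearMap.id π.toLinearMap) LinearMap.id := by
    ext x z' y z
    simp [hM, hN₁, hc]
  -- second factorization : through (id ⊗ π) on the right factor
  set N₂ : (A ⊗[ℂ] A) ⊗[ℂ] (A ⊗[ℂ] B) →ₗ[ℂ] A :=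
    (TensorProduct.rid ℂ A).toLinearMap
      ∘ₗ TensorProduct.map (LinearMap.mul' ℂ A)
          (c'.J ∘ₗ TensorProduct.map π.toLinearMap LinearMap.id)
      ∘ₗ (TensorProduct.tensorTensorTensorComm ℂ A A A B).toLinearMap with hN₂
  have key₂ : M = N₂ ∘ₗ TensorProduct.map LinearMap.id
      (TensorProduct.map LinearMap.id π.toLinearMap) := by
    ext x z' y z
    simp [hM, hN₂, hc]
  -- compute mulJ (a ⊗ b) = a * b
  have e₁ : c.mulJ (a ⊗ₜ[ℂ] b) = a * b := by
    rw [hmulJ, key₁]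
    simp only [LinearMap.comp_apply, TensorProduct.map_tmul, LinearMap.id_apply, ha]
    have : N₁ ∘ₗ TensorProduct.mk ℂ (A ⊗[ℂ] B) (A ⊗[ℂ] A) (a ⊗ₜ[ℂ] (1 : B))
        = LinearMap.mulLeft ℂ a ∘ₗ (TensorProduct.rid ℂ A).toLinearMap
            ∘ₗ (Coalgebra.counit (R := ℂ)).lTensor A := by
      ext y z
      simp [hN₁, c'.norm_left, hcounit' z, mul_assoc, mul_comm, Algebra.smul_def]
    have := LinearMap.congr_fun this (Coalgebra.comul (R := ℂ) b)
    simp only [LinearMap.comp_apply, TensorProduct.mk_apply] at this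
    rw [this, Coalgebra.lTensor_counit_comul]
    simp
  -- compute mulJ (b ⊗ a) = b * a
  have e₂ : c.mulJ (b ⊗ₜ[ℂ] a) = b * a := by
    rw [hmulJ, key₂]
    simp only [LinearMap.comp_apply, TensorProduct.map_tmul, LinearMap.id_apply, ha]
    have : N₂ ∘ₗ (TensorProduct.mk ℂ (A ⊗[ℂ] A) (A ⊗[ℂ] B)).flip (a ⊗ₜ[ℂ] (1 : B))
        = LinearMap.mulRight ℂ a ∘ₗ (TensorProduct.rid ℂ A).toLinearMap
            ∘ₗ (Coalgebra.counit (R := ℂ)).lTensor A := by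
      ext y z
      simp [hN₂, c'.norm_right, hcounit' z, mul_assoc, mul_comm, Algebra.smul_def]
    have := LinearMap.congr_fun this (Coalgebra.comul (R := ℂ) b)
    simp only [LinearMap.comp_apply, LinearMap.flip_apply, TensorProduct.mk_apply] at this
    rw [this, Coalgebra.lTensor_counit_comul]
    simp
  rw [e₁, e₂, mul_comm]

end Twisting
end
end

section
/- Let Γ be a free abelian group of finite rank (written multiplicatively), let σ : Γ × Γ → ℂ^× be a bicharacter, and let J_σ be the Hopf 2-cocycle for ℂ[Γ] determined by J_σ(g ⊗ h) = σ(g,h) for g, h ∈ Γ. Then J_σ is minimal if and only if the alternating bicharacter λ(g,h) := σ(g,h)σ(h,g)⁻¹ is nondegenerate, i.e. if λ(g,h) = 1 for all h ∈ Γ implies g = 1. -/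
open TensorProduct

noncomputable section

namespace Twisting

variable (A : Type*) [CommRing A] [HopfAlgebra ℂ A]

variable {A}

/-- A realization of the commutative Hopf `ℂ`-algebra `A` as the group Hopf algebra
`ℂ[Γ]` of the (multiplicative) abelian group `Γ`: a monoid homomorphism `of : Γ → A`
whose image is a `ℂ`-basis of `A` consisting of grouplike elements, with
`S(of g) = of g⁻¹`. -/
structure GroupLikeBasis (Γ : Type*) [CommGroup Γ] (A : Type*) [CommRing A]
    [HopfAlgebra ℂ A] where
  of : Γ →* A
  basis : Module.Basis Γ ℂ A
  basis_eq : ∀ g : Γ, basis g = of g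
  comul_of : ∀ g : Γ, Coalgebra.comul (R := ℂ) (of g) = of g ⊗ₜ[ℂ] of g
  counit_of : ∀ g : Γ, Coalgebra.counit (R := ℂ) (of g) = (1 : ℂ)
  antipode_of : ∀ g : Γ, HopfAlgebra.antipode (R := ℂ) (of g) = of g⁻¹

/-- `Γ` is a free abelian group of finite rank. -/
def IsFreeAbelianOfFiniteRank (Γ : Type*) [CommGroup Γ] : Prop :=
  ∃ n : ℕ, Nonempty (Γ ≃* Multiplicative (Fin n → ℤ))

lemma conv_apply_grouplike (F G : A ⊗[ℂ] A →ₗ[ℂ] ℂ) {x y : A}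
    (hx : Coalgebra.comul (R := ℂ) x = x ⊗ₜ[ℂ] x)
    (hy : Coalgebra.comul (R := ℂ) y = y ⊗ₜ[ℂ] y) :
    conv F G (x ⊗ₜ[ℂ] y) = F (x ⊗ₜ[ℂ] y) * G (x ⊗ₜ[ℂ] y) := by
  simp [conv, TensorProduct.comul_def, hx, hy,
    TensorProduct.tensorTensorTensorComm_tmul, LinearMap.mul'_apply]

/-- For a free abelian group `Γ` of finite rank, a bicharacter
`σ : Γ × Γ → ℂˣ` and the associated Hopf 2-cocycle `J_σ` for `ℂ[Γ]`:  `J_σ` is minimal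
if and only if the alternating bicharacter `λ(g,h) = σ(g,h)σ(h,g)⁻¹` is nondegenerate. -/
theorem statement9 (Γ : Type*) [CommGroup Γ] (hfree : IsFreeAbelianOfFiniteRank Γ)
    (A : Type*) [CommRing A] [HopfAlgebra ℂ A] (gb : GroupLikeBasis Γ A)
    (σ : Γ →* Γ →* ℂˣ) (c : Hopf2Cocycle A)
    (hc : ∀ g h : Γ, c.J (gb.of g ⊗ₜ[ℂ] gb.of h) = (σ g h : ℂ)) :
    c.Minimal ↔ ∀ g : Γ, (∀ h : Γ, σ g h * (σ h g)⁻¹ = 1) → g = 1 := by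
  clear hfree
  -- the alternating bicharacter λ(g,h) = σ(g,h) σ(h,g)⁻¹ as a homomorphism in g
  set lam : Γ →* Γ →* ℂˣ := σ * σ.flip⁻¹ with hlam
  have hlam_apply : ∀ g h : Γ, lam g h = σ g h * (σ h g)⁻¹ := fun g h => rfl
  -- value of Jinv on grouplikes
  have hJinv : ∀ g h : Γ, c.Jinv (gb.of g ⊗ₜ[ℂ] gb.of h) = (((σ g h)⁻¹ : ℂˣ) : ℂ) := by
    intro g h
    have h1 := LinearMap.congr_fun c.conv_right_inv (gb.of g ⊗ₜ[ℂ] gb.of h)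
    rw [conv_apply_grouplike _ _ (gb.comul_of g) (gb.comul_of h)] at h1
    have h2 : Coalgebra.counit (R := ℂ) (gb.of g ⊗ₜ[ℂ] gb.of h) = 1 := by
      simp [TensorProduct.counit_def, LinearMap.mul'_apply,
        gb.counit_of]
    rw [h2, hc] at h1
    rw [Units.val_inv_eq_inv_val]
    exact eq_inv_of_mul_eq_one_left (by rw [mul_comm]; exact h1)
  -- value of RJ on grouplikes
  have hRJ : ∀ g h : Γ, c.RJ (gb.of g ⊗ₜ[ℂ] gb.of h) = ((lam g h : ℂˣ) : ℂ) := by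
    intro g h
    rw [Hopf2Cocycle.RJ, conv_apply_grouplike _ _ (gb.comul_of g) (gb.comul_of h)]
    simp only [LinearMap.coe_comp, Function.comp_apply, LinearEquiv.coe_coe,
      TensorProduct.comm_tmul, hJinv, hc, hlam_apply, Units.val_mul,
      Units.val_inv_eq_inv_val]
    ring
  constructor
  · -- minimal → nondegenerate
    intro hmin g hg
    set a : A := gb.of g - gb.of 1 with ha
    have hL : (c.RJ ∘ₗ TensorProduct.mk ℂ A A a) = 0 := by
      apply gb.basis.ext
      intro h
      have : c.RJ (a ⊗ₜ[ℂ] gb.of h) = 0 := by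
        rw [ha, TensorProduct.sub_tmul, map_sub, hRJ, hRJ]
        have h1 : lam g h = 1 := by rw [hlam_apply]; exact hg h
        have h2 : lam 1 h = 1 := by rw [hlam_apply]; simp
        rw [h1, h2, sub_self]
      simpa [gb.basis_eq] using this
    have ha0 : a = 0 := hmin a fun b => LinearMap.congr_fun hL b
    have : gb.basis g = gb.basis 1 := by
      rw [gb.basis_eq, gb.basis_eq]; exact sub_eq_zero.mp ha0
    exact gb.basis.injective this
  · -- nondegenerate → minimal
    intro hnd a ha
    -- the characters λ(g, ·) : Γ →* ℂ
    set f : Γ → (Γ →* ℂ) := fun g => (Units.coeHom ℂ).comp (lam g) with hf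
    have hf_inj : Function.Injective f := by
      intro g g' hgg'
      have hval : ∀ h : Γ, lam g h = lam g' h := by
        intro h
        exact Units.ext (DFunLike.congr_fun hgg' h)
      have : g * g'⁻¹ = 1 := by
        apply hnd
        intro h
        have : lam (g * g'⁻¹) h = 1 := by
          rw [map_mul, map_inv]
          simp only [MonoidHom.mul_apply, MonoidHom.inv_apply, hval h]
          exact mul_inv_cancel ((lam g') h)
        rw [hlam_apply] at this
        exact this
      exact mul_inv_eq_one.mp this
    have hLI : LinearIndependent ℂ (fun g : Γ => ⇑(f g)) :=
      (linearIndependent_monoidHom Γ ℂ).comp f hf_inj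
    set r := gb.basis.repr a with hr
    have hsum : ∀ h : Γ, c.RJ (a ⊗ₜ[ℂ] gb.of h)
        = r.sum fun g cg => cg * ((lam g h : ℂˣ) : ℂ) := by
      intro h
      conv_lhs => rw [← gb.basis.linearCombination_repr a]
      rw [Finsupp.linearCombination_apply, ← hr, Finsupp.sum, Finsupp.sum,
        TensorProduct.sum_tmul]
      rw [map_sum]
      refine Finset.sum_congr rfl fun g _ => ?_
      rw [← TensorProduct.smul_tmul', map_smul, smul_eq_mul, gb.basis_eq, hRJ]
    have hcomb : Finsupp.linearCombination ℂ (fun g : Γ => ⇑(f g)) r = 0 := by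
      funext h
      rw [Finsupp.linearCombination_apply]
      have := (ha (gb.of h)).symm
      rw [hsum h] at this
      calc (r.sum fun g cg => cg • ⇑(f g)) h
          = r.sum fun g cg => cg * ((lam g h : ℂˣ) : ℂ) := by
            rw [Finsupp.sum, Finsupp.sum, Finset.sum_apply]
            exact Finset.sum_congr rfl fun g _ => rfl
        _ = 0 := this.symm
    have hr0 : r = 0 := linearIndependent_iff.mp hLI r hcomb
    have := gb.basis.linearCombination_repr a
    rw [← hr, hr0, map_zero] at this
    exact this.symm


end Twisting
end
end

section
/- Let Γ be a finitely generated abelian group and let J be a Hopf 2-cocycle for the group Hopf algebra ℂ[Γ] such that for every g ∈ Γ with g ≠ 1 there exists h ∈ Γ with J(g ⊗ h) ≠ J(h ⊗ g) (i.e. the alternating bicharacter λ(g,h) = J(g ⊗ h) J(h ⊗ g)⁻¹ is nondegenerate on Γ). Then the twisted algebra ℂ[Γ]_J is a simple ring (its only two-sided ideals are 0 and the whole ring). -/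
open TensorProduct

noncomputable section

namespace Twisting

variable (A : Type*) [CommRing A] [HopfAlgebra ℂ A]

variable {A}

section Aux

variable {Γ : Type*} [CommGroup Γ] {A : Type*} [CommRing A] [HopfAlgebra ℂ A]
  (gb : GroupLikeBasis Γ A) (c : Hopf2Cocycle A)

lemma conv_apply_gl {C : Type*} [AddCommMonoid C] [Module ℂ C] [CoalgebraStruct ℂ C]
    (F G : C →ₗ[ℂ] ℂ) (x : C) (hx : Coalgebra.comul (R := ℂ) x = x ⊗ₜ[ℂ] x) :
    conv F G x = F x * G x := by
  simp [conv, hx]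

lemma comul_of_tmul (g h : Γ) :
    Coalgebra.comul (R := ℂ) (gb.of g ⊗ₜ[ℂ] gb.of h)
      = (gb.of g ⊗ₜ[ℂ] gb.of h) ⊗ₜ[ℂ] (gb.of g ⊗ₜ[ℂ] gb.of h) := by
  simp only [TensorProduct.comul_tmul, LinearMap.coe_comp, LinearEquiv.coe_coe,
    Function.comp_apply, map_tmul, gb.comul_of, AlgebraTensorModule.tensorTensorTensorComm_tmul]

lemma counit_of_tmul (g h : Γ) :
    Coalgebra.counit (R := ℂ) (gb.of g ⊗ₜ[ℂ] gb.of h) = 1 := by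
  simp only [TensorProduct.counit_tmul, LinearMap.coe_comp, Function.comp_apply,
    map_tmul, gb.counit_of, LinearMap.mul'_apply, mul_one, smul_eq_mul]

lemma comul_of_tmul3 (g h k : Γ) :
    Coalgebra.comul (R := ℂ) ((gb.of g ⊗ₜ[ℂ] gb.of h) ⊗ₜ[ℂ] gb.of k)
      = ((gb.of g ⊗ₜ[ℂ] gb.of h) ⊗ₜ[ℂ] gb.of k) ⊗ₜ[ℂ] ((gb.of g ⊗ₜ[ℂ] gb.of h) ⊗ₜ[ℂ] gb.of k) := by
  simp only [TensorProduct.comul_tmul, LinearMap.coe_comp, LinearEquiv.coe_coe,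
    Function.comp_apply, map_tmul, comul_of_tmul gb, gb.comul_of,
    AlgebraTensorModule.tensorTensorTensorComm_tmul]

/-- The scalar values of the cocycle on the grouplike basis. -/
def Jf (g h : Γ) : ℂ := c.J (gb.of g ⊗ₜ[ℂ] gb.of h)

lemma Jf_mul_Jinv (g h : Γ) : Jf gb c g h * c.Jinv (gb.of g ⊗ₜ[ℂ] gb.of h) = 1 := by
  have := congrFun (congrArg DFunLike.coe c.conv_right_inv) (gb.of g ⊗ₜ[ℂ] gb.of h)
  rwa [conv_apply_gl _ _ _ (comul_of_tmul gb g h), counit_of_tmul gb g h] at this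

lemma Jf_ne_zero (g h : Γ) : Jf gb c g h ≠ 0 :=
  left_ne_zero_of_mul_eq_one (Jf_mul_Jinv gb c g h)

lemma of_one : gb.of (1 : Γ) = 1 := map_one gb.of

lemma Jf_one_right (g : Γ) : Jf gb c g 1 = 1 := by
  simp [Jf, of_one gb, c.norm_right, gb.counit_of]

lemma Jf_one_left (g : Γ) : Jf gb c 1 g = 1 := by
  simp [Jf, of_one gb, c.norm_left, gb.counit_of]

lemma Jf_cocycle (g h k : Γ) :
    Jf gb c (g * h) k * Jf gb c g h = Jf gb c g (h * k) * Jf gb c h k := by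
  have := congrFun (congrArg DFunLike.coe c.cocycle) ((gb.of g ⊗ₜ[ℂ] gb.of h) ⊗ₜ[ℂ] gb.of k)
  rw [conv_apply_gl _ _ _ (comul_of_tmul3 gb g h k),
    conv_apply_gl _ _ _ (comul_of_tmul3 gb g h k)] at this
  simpa [Jf, map_mul, gb.counit_of] using this

lemma mulJ_of (g h : Γ) :
    c.mulJ (gb.of g ⊗ₜ[ℂ] gb.of h) = Jf gb c g h • gb.of (g * h) := by
  simp [Hopf2Cocycle.mulJ, gb.comul_of, Jf, map_mul]

/-- Conjugation scalar. -/
def mu (h g : Γ) : ℂ := Jf gb c h g * Jf gb c (h * g) h⁻¹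

/-- The alternating bicharacter. -/
def lam (h g : Γ) : ℂ := Jf gb c h g * (Jf gb c g h)⁻¹

lemma mu_eq (h g : Γ) : mu gb c h g = lam gb c h g * Jf gb c h h⁻¹ := by
  have key : Jf gb c (h * g) h⁻¹ * Jf gb c g h = Jf gb c h h⁻¹ := by
    have := Jf_cocycle gb c g h h⁻¹
    rwa [mul_inv_cancel, Jf_one_right, one_mul, mul_comm g h] at this
  have h0 := Jf_ne_zero gb c g h
  have hinv : (Jf gb c g h)⁻¹ * Jf gb c g h = 1 := inv_mul_cancel₀ h0
  unfold mu lam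
  refine mul_right_cancel₀ h0 ?_
  linear_combination (Jf gb c h g) * key - (Jf gb c h g * Jf gb c h h⁻¹) * hinv

lemma lam_ne_zero (h g : Γ) : lam gb c h g ≠ 0 :=
  mul_ne_zero (Jf_ne_zero gb c h g) (inv_ne_zero (Jf_ne_zero gb c g h))

lemma lam_mul (h g₁ g₂ : Γ) : lam gb c h (g₁ * g₂) = lam gb c h g₁ * lam gb c h g₂ := by
  have n : ∀ a b : Γ, Jf gb c a b ≠ 0 := Jf_ne_zero gb c
  have e1 := Jf_cocycle gb c h g₁ g₂
  have e2 := Jf_cocycle gb c g₁ g₂ h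
  have e3 := Jf_cocycle gb c g₁ h g₂
  rw [mul_comm g₁ h] at e3
  rw [mul_comm g₂ h] at e2
  -- e1 : Jf (h*g₁) g₂ * Jf h g₁ = Jf h (g₁*g₂) * Jf g₁ g₂
  -- e2 : Jf (g₁*g₂) h * Jf g₁ g₂ = Jf g₁ (h*g₂) * Jf g₂ h
  -- e3 : Jf (h*g₁) g₂ * Jf g₁ h = Jf g₁ (h*g₂) * Jf h g₂
  have key : Jf gb c h (g₁ * g₂) * (Jf gb c g₁ h * Jf gb c g₂ h)
      = (Jf gb c h g₁ * Jf gb c h g₂) * Jf gb c (g₁ * g₂) h := by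
    apply mul_left_cancel₀ (n g₁ g₂)
    linear_combination (Jf gb c g₁ h * Jf gb c g₂ h) * e1.symm
      + (Jf gb c h g₁ * Jf gb c g₂ h) * e3 - (Jf gb c h g₁ * Jf gb c h g₂) * e2
  unfold lam
  field_simp [n g₁ h, n g₂ h, n (g₁ * g₂) h]
  linear_combination key


include gb in
lemma mulJ_one_left (x : A) : c.mulJ ((1 : A) ⊗ₜ[ℂ] x) = x := by
  have : c.mulJ ∘ₗ TensorProduct.mk ℂ A A 1 = LinearMap.id := by
    apply Module.Basis.ext gb.basis
    intro g
    simp only [LinearMap.comp_apply, TensorProduct.mk_apply, LinearMap.id_apply, gb.basis_eq]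
    conv_lhs => rw [← of_one gb]
    rw [mulJ_of, Jf_one_left, one_mul, one_smul]
  simpa using congrFun (congrArg DFunLike.coe this) x

include gb in
lemma mulJ_one_right (x : A) : c.mulJ (x ⊗ₜ[ℂ] (1 : A)) = x := by
  have : c.mulJ ∘ₗ (TensorProduct.mk ℂ A A).flip 1 = LinearMap.id := by
    apply Module.Basis.ext gb.basis
    intro g
    simp only [LinearMap.comp_apply, LinearMap.flip_apply, TensorProduct.mk_apply,
      LinearMap.id_apply, gb.basis_eq]
    conv_lhs => rw [← of_one gb]
    rw [mulJ_of, Jf_one_right, mul_one, one_smul]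
  simpa using congrFun (congrArg DFunLike.coe this) x

include gb in
lemma mulJ_smul_one_left (d : ℂ) (x : A) : c.mulJ ((d • (1 : A)) ⊗ₜ[ℂ] x) = d • x := by
  rw [← TensorProduct.smul_tmul', map_smul, mulJ_one_left gb]

lemma repr_T (h g : Γ) (x : A) :
    gb.basis.repr (c.mulJ (c.mulJ (gb.of h ⊗ₜ[ℂ] x) ⊗ₜ[ℂ] gb.of h⁻¹)) g
      = mu gb c h g * gb.basis.repr x g := by
  have key : gb.basis.coord g ∘ₗ (c.mulJ ∘ₗ (TensorProduct.mk ℂ A A).flip (gb.of h⁻¹)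
        ∘ₗ c.mulJ ∘ₗ TensorProduct.mk ℂ A A (gb.of h))
      = mu gb c h g • gb.basis.coord g := by
    apply Module.Basis.ext gb.basis
    intro g'
    have hcan : h * g' * h⁻¹ = g' := by
      rw [mul_comm h g', mul_inv_cancel_right]
    simp only [LinearMap.comp_apply, TensorProduct.mk_apply, LinearMap.flip_apply,
      LinearMap.smul_apply, smul_eq_mul]
    rw [gb.basis_eq, mulJ_of, ← TensorProduct.smul_tmul', map_smul, mulJ_of, hcan, smul_smul,
      ← gb.basis_eq, map_smul]
    by_cases hgg : g' = g
    · subst hgg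
      simp [mu]
    · simp [Module.Basis.coord_apply, Module.Basis.repr_self, Finsupp.single_apply, hgg]
  simpa using congrFun (congrArg DFunLike.coe key) x

end Aux

/-- Let `Γ` be a finitely generated abelian group and `J` a Hopf 2-cocycle
for `ℂ[Γ]` whose associated alternating bicharacter `λ(g,h) = J(g ⊗ h)J(h ⊗ g)⁻¹` is
nondegenerate.  Then the twisted algebra `ℂ[Γ]_J` is a simple ring: its only two-sided
ideals are `0` and the whole ring. -/
theorem statement12 (Γ : Type*) [CommGroup Γ] (hfg : Group.FG Γ)
    (A : Type*) [CommRing A] [HopfAlgebra ℂ A] (gb : GroupLikeBasis Γ A)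
    (c : Hopf2Cocycle A)
    (hnd : ∀ g : Γ, g ≠ 1 →
      ∃ h : Γ, c.J (gb.of g ⊗ₜ[ℂ] gb.of h) ≠ c.J (gb.of h ⊗ₜ[ℂ] gb.of g)) :
    ∀ I : AddSubgroup A,
      (∀ x ∈ I, ∀ a : A, c.mulJ (a ⊗ₜ[ℂ] x) ∈ I ∧ c.mulJ (x ⊗ₜ[ℂ] a) ∈ I) →
      I = ⊥ ∨ I = ⊤ := by
  classical
  intro I hI
  by_cases hbot : I = ⊥
  · exact Or.inl hbot
  right
  obtain ⟨x0, hx0I, hx0⟩ : ∃ x ∈ I, x ≠ 0 := by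
    by_contra hcon
    push_neg at hcon
    exact hbot ((AddSubgroup.eq_bot_iff_forall I).2 hcon)
  have hsmul : ∀ x ∈ I, ∀ d : ℂ, d • x ∈ I := by
    intro x hx d
    have := (hI x hx (d • (1 : A))).1
    rwa [mulJ_smul_one_left gb] at this
  have hone : (1 : A) ∈ I := by
    have key : ∀ n : ℕ, ∀ x ∈ I, x ≠ 0 → (gb.basis.repr x).support.card ≤ n → (1 : A) ∈ I := by
      intro n
      induction n with
      | zero =>
        intro x hx hxne hc
        exfalso
        apply hxne
        have hrepr : gb.basis.repr x = 0 := by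
          rw [← Finsupp.support_eq_empty, ← Finset.card_eq_zero]
          omega
        simpa using gb.basis.repr.map_eq_zero_iff.1 hrepr
      | succ n ih =>
        intro x hx hxne hc
        set f := gb.basis.repr x with hf
        have hsupp : f.support.Nonempty := by
          rw [Finsupp.support_nonempty_iff]
          intro h0
          exact hxne (by simpa using gb.basis.repr.map_eq_zero_iff.1 h0)
        by_cases hcard : f.support.card ≤ 1
        · -- singleton support
          have h1 : f.support.card = 1 :=
            le_antisymm hcard (Finset.card_pos.2 hsupp)
          obtain ⟨g, hb, hfs⟩ := Finsupp.card_support_eq_one.1 h1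
          set b := f g with hbdef
          have hxe : x = b • gb.of g := by
            apply gb.basis.repr.injective
            rw [← hf, hfs, ← gb.basis_eq, map_smul, gb.basis.repr_self, Finsupp.smul_single,
              smul_eq_mul, mul_one]
          have hyI := (hI x hx (gb.of g⁻¹)).2
          rw [hxe, ← TensorProduct.smul_tmul', map_smul, mulJ_of, mul_inv_cancel,
            of_one gb, smul_smul] at hyI
          have hne : b * Jf gb c g g⁻¹ ≠ 0 := mul_ne_zero hb (Jf_ne_zero gb c g g⁻¹)
          have := hsmul _ hyI (b * Jf gb c g g⁻¹)⁻¹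
          rwa [smul_smul, inv_mul_cancel₀ hne, one_smul] at this
        · -- at least two elements in the support
          push_neg at hcard
          obtain ⟨g₁, hg₁⟩ := hsupp
          obtain ⟨g₂, hg₂, hne⟩ := Finset.exists_mem_ne hcard g₁
          set k := g₂ * g₁⁻¹ with hk
          have hk1 : k ≠ 1 := by
            intro hk1
            exact hne (mul_inv_eq_one.1 hk1)
          obtain ⟨h, hJ⟩ := hnd k hk1
          have hlamk : lam gb c h k ≠ 1 := by
            intro heq
            apply hJ
            have := (mul_inv_eq_one₀ (Jf_ne_zero gb c k h)).1 heq
            exact this.symm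
          have hmune : mu gb c h g₁ ≠ mu gb c h g₂ := by
            rw [mu_eq, mu_eq]
            intro heq
            have hl : lam gb c h g₁ = lam gb c h g₂ :=
              mul_right_cancel₀ (Jf_ne_zero gb c h h⁻¹) heq
            have hg2 : lam gb c h g₂ = lam gb c h k * lam gb c h g₁ := by
              rw [← lam_mul, hk, inv_mul_cancel_right]
            apply hlamk
            apply mul_right_cancel₀ (lam_ne_zero gb c h g₁)
            rw [one_mul, ← hg2, hl]
          set y := c.mulJ (c.mulJ (gb.of h ⊗ₜ[ℂ] x) ⊗ₜ[ℂ] gb.of h⁻¹) with hy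
          have hyI : y ∈ I := (hI _ (hI x hx (gb.of h)).1 (gb.of h⁻¹)).2
          set z := mu gb c h g₁ • x - y with hz
          have hzI : z ∈ I := AddSubgroup.sub_mem I (hsmul x hx _) hyI
          have hrz : ∀ g, gb.basis.repr z g = (mu gb c h g₁ - mu gb c h g) * f g := by
            intro g
            rw [hz, map_sub, Finsupp.sub_apply, map_smul, Finsupp.smul_apply,
              repr_T gb c, smul_eq_mul, ← hf]
            ring
          have hz2 : gb.basis.repr z g₂ ≠ 0 := by
            rw [hrz]
            exact mul_ne_zero (sub_ne_zero.2 hmune) (Finsupp.mem_support_iff.1 hg₂)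
          have hz0 : z ≠ 0 := by
            intro h0
            rw [h0] at hz2
            simp at hz2
          have hsub : (gb.basis.repr z).support ⊆ f.support.erase g₁ := by
            intro g hg
            rw [Finset.mem_erase]
            constructor
            · intro hgg
              subst hgg
              apply Finsupp.mem_support_iff.1 hg
              rw [hrz]
              simp
            · rw [Finsupp.mem_support_iff]
              intro hfz
              apply Finsupp.mem_support_iff.1 hg
              rw [hrz, hfz, mul_zero]
          have hcard' : (gb.basis.repr z).support.card ≤ n := by
            have h1 := Finset.card_le_card hsub
            have h2 := Finset.card_erase_of_mem hg₁
            omega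
          exact ih z hzI hz0 hcard'
    exact key _ x0 hx0I hx0 le_rfl
  rw [AddSubgroup.eq_top_iff']
  intro a
  have := (hI 1 hone a).1
  rwa [mulJ_one_right gb] at this

end Twisting
end
end
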